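/- arXiv:2501.15027 — 8 statements merged into one kernel-verified Lean document; each statement's English description precedes it below -/
import Mathlib

section
/- If K has characteristic 0, then the set 𝓜₀(M) of all multiplicative arithmetic functions on M is a subgroup of the unit group 𝒜(M)^× (under Dirichlet product), and this subgroup is torsion-free: if f is multiplicative and the n-fold Dirichlet power f^{∗n} = e for some n ≥ 1, then f = e. -/
open scoped BigOperators

/-- The monoid `M` has trivial unit group: the only unit is `1`. -/
def TrivUnits (M : Type*) [CommMonoid M] : Prop := ∀ u : M, IsUnit u → u = 1

/-- `M` is a unique factorization monoid: every element is a product of a multiset of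
irreducible elements, and such a multiset is unique (exact uniqueness, which is the
correct formulation when the unit group is trivial). -/
def IsUFM (M : Type*) [CommMonoid M] : Prop :=
  (∀ a : M, ∃ l : Multiset M, (∀ b ∈ l, Irreducible b) ∧ l.prod = a) ∧
  ∀ l l' : Multiset M, (∀ b ∈ l, Irreducible b) → (∀ b ∈ l', Irreducible b) →
    l.prod = l'.prod → l = l'

/-- The Dirichlet product `(f ∗ g)(a) = ∑_{bc = a} f(b) g(c)`.  (The sum is a
`finsum`, which agrees with the intended finite sum since in a unique factorization
monoid with trivial units every element has only finitely many decompositions.) -/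
noncomputable def dmul (M K : Type*) [CommMonoid M] [Field K] (f g : M → K) : M → K :=
  fun a => ∑ᶠ (p : M × M) (_ : p.1 * p.2 = a), f p.1 * g p.2

open Classical in
/-- The identity arithmetic function `e`: `e 1 = 1` and `e a = 0` for `a ≠ 1`. -/
noncomputable def dOne (M K : Type*) [CommMonoid M] [Field K] : M → K :=
  fun a => if a = 1 then 1 else 0

/-- A prime element of the monoid `M`: a non-unit `p` such that `p ∣ ab` implies
`p ∣ a` or `p ∣ b`. -/
def IsPrimeElem {M : Type*} [CommMonoid M] (p : M) : Prop :=
  ¬IsUnit p ∧ ∀ a b : M, p ∣ a * b → p ∣ a ∨ p ∣ b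

/-- Two elements of `M` are relatively prime if they have no common prime factor. -/
def RelPrime {M : Type*} [CommMonoid M] (a b : M) : Prop :=
  ∀ p : M, IsPrimeElem p → p ∣ a → ¬p ∣ b

/-- A multiplicative arithmetic function: `f 1 = 1` and `f (ab) = f a * f b`
whenever `a` and `b` are relatively prime. -/
def IsMultFn {M K : Type*} [CommMonoid M] [Field K] (f : M → K) : Prop :=
  f 1 = 1 ∧ ∀ a b : M, RelPrime a b → f (a * b) = f a * f b

/-- The `n`-fold Dirichlet power of `f`. -/
noncomputable def dpow {M K : Type*} [CommMonoid M] [Field K] (f : M → K) : ℕ → (M → K)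
  | 0 => dOne M K
  | n + 1 => dmul M K f (dpow f n)

/-! ### Auxiliary development -/

namespace UFMx

section Aux

variable {M : Type*} [CommMonoid M] (hU : IsUFM M)

include hU

noncomputable def fac (a : M) : Multiset M := (hU.1 a).choose

lemma fac_irr (a : M) : ∀ b ∈ fac hU a, Irreducible b := (hU.1 a).choose_spec.1

lemma fac_prod (a : M) : (fac hU a).prod = a := (hU.1 a).choose_spec.2

lemma fac_eq {l : Multiset M} (hl : ∀ b ∈ l, Irreducible b) : fac hU l.prod = l :=
  hU.2 _ _ (fac_irr hU _) hl (fac_prod hU _)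

lemma fac_inj {a b : M} (h : fac hU a = fac hU b) : a = b := by
  rw [← fac_prod hU a, ← fac_prod hU b, h]

lemma fac_mul (a b : M) : fac hU (a * b) = fac hU a + fac hU b := by
  have h : (fac hU a + fac hU b).prod = a * b := by
    rw [Multiset.prod_add, fac_prod, fac_prod]
  rw [← h, fac_eq hU]
  intro x hx
  rcases Multiset.mem_add.1 hx with h' | h'
  · exact fac_irr hU a x h'
  · exact fac_irr hU b x h'

lemma fac_one : fac hU (1 : M) = 0 := by
  have := fac_eq hU (l := (0 : Multiset M)) (by simp)
  simpa using this

lemma eq_one_of_fac {a : M} (h : fac hU a = 0) : a = 1 :=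
  fac_inj hU (by rw [h, fac_one])

lemma mul_cancel {a b c : M} (h : a * b = a * c) : b = c := by
  apply fac_inj hU
  have h2 := congrArg (fac hU) h
  rw [fac_mul hU, fac_mul hU] at h2
  exact add_left_cancel h2

lemma mul_eq_one' {a b : M} (h : a * b = 1) : a = 1 ∧ b = 1 := by
  have h0 : fac hU a + fac hU b = 0 := by rw [← fac_mul hU, h, fac_one hU]
  have ha : fac hU a = 0 := Multiset.le_zero.1 (h0 ▸ Multiset.le_add_right _ _)
  have hb : fac hU b = 0 := Multiset.le_zero.1 (h0 ▸ Multiset.le_add_left _ _)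
  exact ⟨eq_one_of_fac hU ha, eq_one_of_fac hU hb⟩

lemma dvd_iff_fac_le {b a : M} : b ∣ a ↔ fac hU b ≤ fac hU a := by
  classical
  constructor
  · rintro ⟨c, rfl⟩
    rw [fac_mul hU]
    exact Multiset.le_add_right _ _
  · intro h
    refine ⟨(fac hU a - fac hU b).prod, ?_⟩
    apply fac_inj hU
    rw [fac_mul hU, fac_eq hU (fun x hx => fac_irr hU a x (Multiset.mem_of_le tsub_le_self hx)),
      add_tsub_cancel_of_le h]

lemma irr_fac {p : M} (hp : Irreducible p) : fac hU p = {p} := by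
  have := fac_eq hU (l := ({p} : Multiset M)) (by simpa using hp)
  simpa using this

lemma irr_dvd_iff_mem {p a : M} (hp : Irreducible p) : p ∣ a ↔ p ∈ fac hU a := by
  rw [dvd_iff_fac_le hU, irr_fac hU hp, Multiset.singleton_le]

lemma prime_iff_irr {p : M} : IsPrimeElem p ↔ Irreducible p := by
  constructor
  · rintro ⟨hu, hp⟩
    refine ⟨hu, fun x y hxy => ?_⟩
    rcases hp x y ⟨1, by rw [hxy, mul_one]⟩ with ⟨z, hz⟩ | ⟨z, hz⟩
    · right
      have h1 : p * 1 = p * (z * y) := by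
        rw [mul_one]; nth_rewrite 1 [hxy]; rw [hz, mul_assoc]
      exact IsUnit.of_mul_eq_one (a := y) z (by rw [mul_comm]; exact (mul_cancel hU h1).symm)
    · left
      have h1 : p * 1 = p * (z * x) := by
        rw [mul_one]; nth_rewrite 1 [hxy]; rw [hz, mul_comm x, mul_assoc]
      exact IsUnit.of_mul_eq_one (a := x) z (by rw [mul_comm]; exact (mul_cancel hU h1).symm)
  · intro hp
    refine ⟨hp.not_isUnit, fun a b hab => ?_⟩
    have hm : p ∈ fac hU a + fac hU b := by
      rw [← fac_mul hU]
      exact (irr_dvd_iff_mem hU hp).1 hab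
    rcases Multiset.mem_add.1 hm with h | h
    · exact Or.inl ((irr_dvd_iff_mem hU hp).2 h)
    · exact Or.inr ((irr_dvd_iff_mem hU hp).2 h)

lemma relPrime_iff {a b : M} :
    RelPrime a b ↔ ∀ x, x ∈ fac hU a → x ∈ fac hU b → False := by
  constructor
  · intro h x hxa hxb
    have hirr := fac_irr hU a x hxa
    exact h x ((prime_iff_irr hU).2 hirr) ((irr_dvd_iff_mem hU hirr).2 hxa)
      ((irr_dvd_iff_mem hU hirr).2 hxb)
  · intro h p hp hpa hpb
    have hirr := (prime_iff_irr hU).1 hp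
    exact h p ((irr_dvd_iff_mem hU hirr).1 hpa) ((irr_dvd_iff_mem hU hirr).1 hpb)

lemma relPrime_of_dvd {a b c d : M} (hc : c ∣ a) (hdv : d ∣ b)
    (h : ∀ x, x ∈ fac hU a → x ∈ fac hU b → False) : RelPrime c d :=
  (relPrime_iff hU).2 (fun x hx1 hx2 =>
    h x (Multiset.mem_of_le ((dvd_iff_fac_le hU).1 hc) hx1)
      (Multiset.mem_of_le ((dvd_iff_fac_le hU).1 hdv) hx2))

lemma finite_S (a : M) : {p : M × M | p.1 * p.2 = a}.Finite := by
  classical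
  apply Set.Finite.of_finite_image (f := fun p : M × M => fac hU p.1)
  · apply Set.Finite.subset ((fac hU a).powerset.finite_toSet)
    rintro s ⟨p, hp, rfl⟩
    simp only [Set.mem_setOf_eq, Multiset.mem_powerset]
    exact (dvd_iff_fac_le hU).1 ⟨p.2, hp.symm⟩
  · rintro p hp q hq h
    have h1 : p.1 = q.1 := fac_inj hU h
    have h2 : p.2 = q.2 := mul_cancel hU (a := p.1) (by rw [hp]; rw [h1]; exact hq.symm)
    exact Prod.ext h1 h2

noncomputable def Sfin (a : M) : Finset (M × M) := (finite_S hU a).toFinset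

lemma mem_Sfin {a : M} {p : M × M} : p ∈ Sfin hU a ↔ p.1 * p.2 = a :=
  Set.Finite.mem_toFinset _

variable {K : Type*} [Field K]

lemma dmul_eq (f g : M → K) (a : M) :
    dmul M K f g a = ∑ p ∈ Sfin hU a, f p.1 * g p.2 :=
  finsum_mem_eq_finite_toFinset_sum _ (finite_S hU a)

lemma Sfin_one : Sfin hU (1 : M) = {((1 : M), (1 : M))} := by
  ext p
  rw [mem_Sfin, Finset.mem_singleton]
  constructor
  · intro h
    obtain ⟨h1, h2⟩ := mul_eq_one' hU h
    exact Prod.ext h1 h2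
  · intro h
    rw [h]
    exact one_mul 1

open Classical in
noncomputable def SfinNe (a : M) : Finset (M × M) :=
  (Sfin hU a).filter (fun p => p.1 ≠ 1)

open Classical in
lemma Sfin_eq_insert (a : M) : Sfin hU a = insert ((1 : M), a) (SfinNe hU a) := by
  ext p
  rw [Finset.mem_insert, SfinNe, Finset.mem_filter]
  constructor
  · intro h
    by_cases h1 : p.1 = 1
    · left
      have : p.2 = a := by rw [← (mem_Sfin hU).1 h, h1, one_mul]
      exact Prod.ext h1 this
    · exact Or.inr ⟨h, h1⟩
  · rintro (h | h)
    · rw [h, mem_Sfin]; exact one_mul a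
    · exact h.1

lemma not_mem_SfinNe (a : M) : ((1 : M), a) ∉ SfinNe hU a := by
  classical
  rw [SfinNe, Finset.mem_filter]
  rintro ⟨-, h⟩
  exact h rfl

omit hU in
lemma ms_split {α : Type*} {u v s : Multiset α} (h : s ≤ u + v) :
    ∃ s1 s2, s1 ≤ u ∧ s2 ≤ v ∧ s = s1 + s2 := by
  classical
  refine ⟨s ∩ u, s - s ∩ u, Multiset.inter_le_right, ?_,
    (add_tsub_cancel_of_le Multiset.inter_le_left).symm⟩
  rw [Multiset.le_iff_count]
  intro x
  have hc := Multiset.le_iff_count.1 h x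
  rw [Multiset.count_add] at hc
  rw [Multiset.count_sub, Multiset.count_inter]
  rcases le_total (Multiset.count x s) (Multiset.count x u) with hx | hx
  · rw [inf_eq_left.2 hx]; omega
  · rw [inf_eq_right.2 hx]; omega

lemma split_dvd {a b c : M} (h : c ∣ a * b) :
    ∃ c1 c2, c1 ∣ a ∧ c2 ∣ b ∧ c = c1 * c2 := by
  have hle : fac hU c ≤ fac hU a + fac hU b := by
    rw [← fac_mul hU]; exact (dvd_iff_fac_le hU).1 h
  obtain ⟨s1, s2, h1, h2, hs⟩ := ms_split hle
  refine ⟨s1.prod, s2.prod, ?_, ?_, ?_⟩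
  · rw [dvd_iff_fac_le hU, fac_eq hU (fun x hx => fac_irr hU a x (Multiset.mem_of_le h1 hx))]
    exact h1
  · rw [dvd_iff_fac_le hU, fac_eq hU (fun x hx => fac_irr hU b x (Multiset.mem_of_le h2 hx))]
    exact h2
  · rw [← fac_prod hU c, hs, Multiset.prod_add]

omit hU in
lemma ms_unique {α : Type*} {u v s1 s2 t1 t2 : Multiset α}
    (hd : ∀ x, x ∈ u → x ∈ v → False)
    (h1 : s1 ≤ u) (h2 : s2 ≤ v) (h3 : t1 ≤ u) (h4 : t2 ≤ v) (h : s1 + s2 = t1 + t2) :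
    s1 = t1 ∧ s2 = t2 := by
  classical
  have key : ∀ w1 : Multiset α, w1 ≤ u → ∀ w2 : Multiset α, w2 ≤ v →
      Multiset.filter (· ∈ u) (w1 + w2) = w1 := by
    intro w1 hw1 w2 hw2
    rw [Multiset.filter_add, Multiset.filter_eq_self.2 (fun x hx => Multiset.mem_of_le hw1 hx),
      Multiset.filter_eq_nil.2 (fun x hx hxu => hd x hxu (Multiset.mem_of_le hw2 hx)), add_zero]
  have e1 : s1 = t1 := by rw [← key s1 h1 s2 h2, h, key t1 h3 t2 h4]
  refine ⟨e1, ?_⟩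
  rw [e1] at h
  exact add_left_cancel h

lemma mul_unique {a b c1 c2 d1 d2 : M}
    (hab : ∀ x, x ∈ fac hU a → x ∈ fac hU b → False)
    (h1 : c1 ∣ a) (h2 : c2 ∣ b) (h3 : d1 ∣ a) (h4 : d2 ∣ b) (h : c1 * c2 = d1 * d2) :
    c1 = d1 ∧ c2 = d2 := by
  have hm : fac hU c1 + fac hU c2 = fac hU d1 + fac hU d2 := by
    rw [← fac_mul hU, ← fac_mul hU, h]
  obtain ⟨e1, e2⟩ := ms_unique hab ((dvd_iff_fac_le hU).1 h1) ((dvd_iff_fac_le hU).1 h2)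
    ((dvd_iff_fac_le hU).1 h3) ((dvd_iff_fac_le hU).1 h4) hm
  exact ⟨fac_inj hU e1, fac_inj hU e2⟩

lemma sum_mul_split (a b : M) (hab : ∀ x, x ∈ fac hU a → x ∈ fac hU b → False)
    (F : M × M → K) :
    ∑ p ∈ Sfin hU (a * b), F p
      = ∑ p ∈ Sfin hU a, ∑ q ∈ Sfin hU b, F (p.1 * q.1, p.2 * q.2) := by
  rw [← Finset.sum_product (f := fun x : (M × M) × (M × M) => F (x.1.1 * x.2.1, x.1.2 * x.2.2))]
  symm
  apply Finset.sum_bij (i := fun (pq : (M × M) × (M × M)) _ => (pq.1.1 * pq.2.1, pq.1.2 * pq.2.2))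
  · intro pq h
    rw [Finset.mem_product, mem_Sfin hU, mem_Sfin hU] at h
    rw [mem_Sfin hU]
    show pq.1.1 * pq.2.1 * (pq.1.2 * pq.2.2) = a * b
    rw [mul_mul_mul_comm, h.1, h.2]
  · intro r1 hr1 r2 hr2 heq
    rw [Finset.mem_product, mem_Sfin hU, mem_Sfin hU] at hr1 hr2
    obtain ⟨e1, e2⟩ := Prod.mk.injEq .. ▸ heq
    have d11 : r1.1.1 ∣ a := ⟨r1.1.2, hr1.1.symm⟩
    have d12 : r1.2.1 ∣ b := ⟨r1.2.2, hr1.2.symm⟩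
    have d21 : r2.1.1 ∣ a := ⟨r2.1.2, hr2.1.symm⟩
    have d22 : r2.2.1 ∣ b := ⟨r2.2.2, hr2.2.symm⟩
    obtain ⟨f1, f2⟩ := mul_unique hU hab d11 d12 d21 d22 e1
    have d11' : r1.1.2 ∣ a := ⟨r1.1.1, by rw [mul_comm]; exact hr1.1.symm⟩
    have d12' : r1.2.2 ∣ b := ⟨r1.2.1, by rw [mul_comm]; exact hr1.2.symm⟩
    have d21' : r2.1.2 ∣ a := ⟨r2.1.1, by rw [mul_comm]; exact hr2.1.symm⟩
    have d22' : r2.2.2 ∣ b := ⟨r2.2.1, by rw [mul_comm]; exact hr2.2.symm⟩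
    obtain ⟨g1, g2⟩ := mul_unique hU hab d11' d12' d21' d22' e2
    exact Prod.ext (Prod.ext f1 g1) (Prod.ext f2 g2)
  · intro r hr
    rw [mem_Sfin hU] at hr
    obtain ⟨c1, c2, hc1, hc2, hc⟩ := split_dvd hU (⟨r.2, hr.symm⟩ : r.1 ∣ a * b)
    obtain ⟨d1, hd1⟩ := hc1
    obtain ⟨d2, hd2⟩ := hc2
    have hr2 : r.2 = d1 * d2 := by
      apply mul_cancel hU (a := r.1)
      rw [hr]
      nth_rewrite 1 [hd1, hd2, hc]
      rw [mul_mul_mul_comm]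
    refine ⟨((c1, d1), (c2, d2)), ?_, ?_⟩
    · rw [Finset.mem_product, mem_Sfin hU, mem_Sfin hU]
      exact ⟨hd1.symm, hd2.symm⟩
    · exact (Prod.ext hc hr2).symm
  · intro pq h
    rfl

open Classical in
noncomputable def dinvAux (hW : IsUFM M) (f : M → K) : ℕ → M → K
  | 0, _ => 1
  | n + 1, a => if a = 1 then 1 else -∑ p ∈ SfinNe hW a, f p.1 * dinvAux hW f n p.2

noncomputable def dinv (hW : IsUFM M) (f : M → K) : M → K :=
  fun a => dinvAux hW f (Multiset.card (fac hW a)) a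

lemma card_pos_of_ne_one {a : M} (ha : a ≠ 1) : Multiset.card (fac hU a) ≠ 0 := by
  intro h
  exact ha (eq_one_of_fac hU (Multiset.card_eq_zero.1 h))

lemma card_snd_le {a : M} {p : M × M} (hp : p ∈ SfinNe hU a) {k : ℕ}
    (hk : Multiset.card (fac hU a) = k + 1) : Multiset.card (fac hU p.2) ≤ k := by
  classical
  rw [SfinNe, Finset.mem_filter, mem_Sfin hU] at hp
  have e : Multiset.card (fac hU p.1) + Multiset.card (fac hU p.2) = k + 1 := by
    rw [← Multiset.card_add, ← fac_mul hU, hp.1, hk]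
  have h1 : Multiset.card (fac hU p.1) ≠ 0 := card_pos_of_ne_one hU hp.2
  omega

lemma dinvAux_eq (f : M → K) :
    ∀ n, ∀ a : M, Multiset.card (fac hU a) ≤ n → dinvAux hU f n a = dinv hU f a := by
  intro n
  induction n using Nat.strong_induction_on with
  | _ n ih =>
    intro a ha
    by_cases hn : Multiset.card (fac hU a) = n
    · rw [dinv, hn]
    have hlt : Multiset.card (fac hU a) < n := lt_of_le_of_ne ha hn
    obtain ⟨m, rfl⟩ : ∃ m, n = m + 1 := ⟨n - 1, by omega⟩
    by_cases h1 : a = 1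
    · subst h1
      have e1 : dinv hU f (1 : M) = 1 := by
        rw [dinv, fac_one hU]
        simp [dinvAux]
      rw [e1]
      simp [dinvAux]
    · obtain ⟨k, hk⟩ : ∃ k, Multiset.card (fac hU a) = k + 1 :=
        ⟨Multiset.card (fac hU a) - 1, by have := card_pos_of_ne_one hU h1; omega⟩
      have e2 : dinv hU f a = dinvAux hU f (k + 1) a := by rw [dinv, hk]
      rw [e2]
      simp only [dinvAux]
      rw [if_neg h1, if_neg h1]
      congr 1
      apply Finset.sum_congr rfl
      intro p hp
      have hc := card_snd_le hU hp hk
      rw [ih m (by omega) p.2 (by omega), ih k (by omega) p.2 hc]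

lemma dinv_one (f : M → K) : dinv hU f 1 = 1 := by
  rw [dinv, fac_one hU]
  simp [dinvAux]

lemma dinv_spec (f : M → K) {a : M} (ha : a ≠ 1) :
    dinv hU f a = -∑ p ∈ SfinNe hU a, f p.1 * dinv hU f p.2 := by
  obtain ⟨k, hk⟩ : ∃ k, Multiset.card (fac hU a) = k + 1 :=
    ⟨Multiset.card (fac hU a) - 1, by have := card_pos_of_ne_one hU ha; omega⟩
  have e2 : dinv hU f a = dinvAux hU f (k + 1) a := by rw [dinv, hk]
  rw [e2]
  simp only [dinvAux]
  rw [if_neg ha]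
  congr 1
  apply Finset.sum_congr rfl
  intro p hp
  rw [dinvAux_eq hU f k p.2 (card_snd_le hU hp hk)]

lemma dmul_dinv (f : M → K) (hf1 : f 1 = 1) : dmul M K f (dinv hU f) = dOne M K := by
  classical
  funext a
  rw [dmul_eq hU, Sfin_eq_insert hU a, Finset.sum_insert (not_mem_SfinNe hU a)]
  by_cases ha : a = 1
  · subst ha
    have : SfinNe hU (1 : M) = ∅ := by
      classical
      ext p
      rw [SfinNe, Finset.mem_filter, mem_Sfin hU]
      simp only [Finset.notMem_empty, iff_false, not_and]
      intro h
      exact fun hne => hne (mul_eq_one' hU h).1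
    rw [this]
    simp [hf1, dinv_one hU, dOne]
  · show f 1 * dinv hU f a + _ = _
    rw [hf1, one_mul, dOne]
    rw [if_neg ha]
    nth_rewrite 1 [dinv_spec hU f ha]
    exact neg_add_cancel _

lemma dpow_one_eval (f : M → K) (hf1 : f 1 = 1) : ∀ n, dpow f n 1 = 1 := by
  intro n
  induction n with
  | zero => simp [dpow, dOne]
  | succ n ih =>
    show dmul M K f (dpow f n) 1 = 1
    rw [dmul_eq hU, Sfin_one hU, Finset.sum_singleton]
    simp [hf1, ih]

lemma dpow_eval (f : M → K) (hf1 : f 1 = 1) {a : M} (ha : a ≠ 1)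
    (Hd : ∀ b : M, fac hU b ≤ fac hU a → b ≠ a → f b = dOne M K b) :
    ∀ n : ℕ, (∀ b : M, fac hU b ≤ fac hU a → b ≠ a → dpow f n b = dOne M K b) ∧
      dpow f n a = (n : K) * f a := by
  intro n
  induction n with
  | zero =>
    refine ⟨fun b _ _ => rfl, ?_⟩
    simp [dpow, dOne, ha]
  | succ n ih =>
    constructor
    · intro b hb hba
      show dmul M K f (dpow f n) b = _
      rw [dmul_eq hU]
      rw [Finset.sum_eq_single_of_mem ((1 : M), b) (by rw [mem_Sfin hU]; exact one_mul b) ?_]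
      · rw [hf1, one_mul]
        exact ih.1 b hb hba
      · intro p hp hne
        rw [mem_Sfin hU] at hp
        have hp1 : p.1 ≠ 1 := by
          intro h1
          exact hne (Prod.ext h1 (by rw [← hp, h1, one_mul]))
        have hleb : fac hU p.1 ≤ fac hU b := (dvd_iff_fac_le hU).1 ⟨p.2, hp.symm⟩
        have hle : fac hU p.1 ≤ fac hU a := le_trans hleb hb
        have hp1a : p.1 ≠ a := by
          intro h1
          exact hba (fac_inj hU (le_antisymm hb (h1 ▸ hleb)))
        rw [Hd p.1 hle hp1a, dOne, if_neg hp1, zero_mul]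
    · classical
      show dmul M K f (dpow f n) a = _
      rw [dmul_eq hU]
      have key : ∀ p ∈ Sfin hU a, f p.1 * dpow f n p.2 =
          (if p = ((1 : M), a) then (n : K) * f a else if p = (a, (1 : M)) then f a else 0) := by
        intro p hp
        rw [mem_Sfin hU] at hp
        by_cases h1 : p = ((1 : M), a)
        · rw [if_pos h1, h1]
          show f 1 * dpow f n a = _
          rw [hf1, one_mul, ih.2]
        · rw [if_neg h1]
          by_cases h2 : p = (a, (1 : M))
          · rw [if_pos h2, h2]
            show f a * dpow f n 1 = f a
            rw [dpow_one_eval hU f hf1 n, mul_one]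
          · rw [if_neg h2]
            have hp1 : p.1 ≠ 1 := fun h => h1 (Prod.ext h (by rw [← hp, h, one_mul]))
            have hpa : p.1 ≠ a := by
              intro h
              refine h2 (Prod.ext h (mul_cancel hU (a := a) ?_))
              rw [mul_one, ← h, hp]
              exact h.symm
            have hle : fac hU p.1 ≤ fac hU a := (dvd_iff_fac_le hU).1 ⟨p.2, hp.symm⟩
            rw [Hd p.1 hle hpa, dOne, if_neg hp1, zero_mul]
      rw [Finset.sum_congr rfl key]
      have hsub : ({((1 : M), a), (a, (1 : M))} : Finset (M × M)) ⊆ Sfin hU a := by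
        intro p hp
        rcases Finset.mem_insert.1 hp with h | h
        · rw [h, mem_Sfin hU]; exact one_mul a
        · rw [Finset.mem_singleton.1 h, mem_Sfin hU]; exact mul_one a
      rw [← Finset.sum_subset hsub ?_]
      · have hne : ((1 : M), a) ≠ (a, (1 : M)) := by
          intro h
          exact ha ((Prod.mk.injEq .. ▸ h).1.symm)
        rw [Finset.sum_pair hne, if_pos rfl, if_neg (fun h => hne h.symm), if_pos rfl]
        push_cast
        ring
      · intro p hp hnp
        rw [Finset.mem_insert, Finset.mem_singleton] at hnp
        push_neg at hnp
        rw [if_neg hnp.1, if_neg hnp.2]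

end Aux

end UFMx

/-!
STATEMENT 2: If K has characteristic 0, the set 𝓜₀(M) of multiplicative arithmetic
functions on M is a subgroup of the unit group of 𝒜(M) under the Dirichlet product
(it contains the identity e, is closed under the product, consists of units, and is
closed under Dirichlet inverses), and this subgroup is torsion-free: if f is
multiplicative and f^{∗n} = e for some n ≥ 1, then f = e.
-/

theorem statement2 {M K : Type*} [CommMonoid M] [Field K] [CharZero K]
    (hT : TrivUnits M) (hU : IsUFM M) :
    -- 𝓜₀(M) contains the identity e
    IsMultFn (dOne M K) ∧
    -- every multiplicative function is a unit of 𝒜(M)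
    (∀ f : M → K, IsMultFn f → ∃ g : M → K, dmul M K f g = dOne M K) ∧
    -- 𝓜₀(M) is closed under the Dirichlet product
    (∀ f g : M → K, IsMultFn f → IsMultFn g → IsMultFn (dmul M K f g)) ∧
    -- 𝓜₀(M) is closed under Dirichlet inverses
    (∀ f g : M → K, IsMultFn f → dmul M K f g = dOne M K → IsMultFn g) ∧
    -- torsion-freeness
    (∀ (f : M → K) (n : ℕ), IsMultFn f → 1 ≤ n → dpow f n = dOne M K → f = dOne M K) := by
  classical
  refine ⟨⟨by simp [dOne], fun a b _ => ?_⟩, ?_, ?_, ?_, ?_⟩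
  · -- dOne is multiplicative
    by_cases ha : a = 1
    · subst ha; rw [one_mul]; simp [dOne]
    · have hab : a * b ≠ 1 := fun h => ha (UFMx.mul_eq_one' hU h).1
      simp only [dOne]
      rw [if_neg hab, if_neg ha, zero_mul]
  · -- inverses exist
    intro f hf
    exact ⟨UFMx.dinv hU f, UFMx.dmul_dinv hU f hf.1⟩
  · -- closed under product
    intro f g hf hg
    constructor
    · rw [UFMx.dmul_eq hU, UFMx.Sfin_one hU, Finset.sum_singleton]
      simp [hf.1, hg.1]
    · intro a b hab
      have hd := (UFMx.relPrime_iff hU).1 hab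
      rw [UFMx.dmul_eq hU, UFMx.dmul_eq hU, UFMx.dmul_eq hU,
        UFMx.sum_mul_split hU a b hd, Finset.sum_mul_sum]
      apply Finset.sum_congr rfl
      intro p hp
      apply Finset.sum_congr rfl
      intro q hq
      rw [UFMx.mem_Sfin hU] at hp hq
      have h1 : RelPrime p.1 q.1 :=
        UFMx.relPrime_of_dvd hU ⟨p.2, hp.symm⟩ ⟨q.2, hq.symm⟩ hd
      have h2 : RelPrime p.2 q.2 :=
        UFMx.relPrime_of_dvd hU ⟨p.1, by rw [mul_comm]; exact hp.symm⟩
          ⟨q.1, by rw [mul_comm]; exact hq.symm⟩ hd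
      show f (p.1 * q.1) * g (p.2 * q.2) = _
      rw [hf.2 _ _ h1, hg.2 _ _ h2]
      ring
  · -- closed under inverses
    intro f g hf hfg
    have hg1 : g 1 = 1 := by
      have h := congrFun hfg 1
      rw [UFMx.dmul_eq hU, UFMx.Sfin_one hU, Finset.sum_singleton] at h
      simpa [hf.1, dOne] using h
    refine ⟨hg1, ?_⟩
    suffices H : ∀ N : ℕ, ∀ a b : M, Multiset.card (UFMx.fac hU (a * b)) = N →
        RelPrime a b → g (a * b) = g a * g b by
      exact fun a b hab => H _ a b rfl hab
    intro N
    induction N using Nat.strong_induction_on with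
    | _ N ih =>
      intro a b hN hab
      by_cases ha : a = 1
      · subst ha; rw [one_mul, hg1, one_mul]
      by_cases hb : b = 1
      · subst hb; rw [mul_one, hg1, mul_one]
      have hd := (UFMx.relPrime_iff hU).1 hab
      have hab1 : a * b ≠ 1 := fun h => ha (UFMx.mul_eq_one' hU h).1
      have h0 : dmul M K f g (a * b) = 0 := by rw [hfg]; simp [dOne, hab1]
      rw [UFMx.dmul_eq hU, UFMx.sum_mul_split hU a b hd] at h0
      have key : ∀ p ∈ UFMx.Sfin hU a, ∀ q ∈ UFMx.Sfin hU b,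
          f (p.1 * q.1) * g (p.2 * q.2) = (f p.1 * g p.2) * (f q.1 * g q.2)
            + (if (p, q) = (((1 : M), a), ((1 : M), b)) then g (a * b) - g a * g b else 0) := by
        intro p hp q hq
        rw [UFMx.mem_Sfin hU] at hp hq
        have hcop1 : RelPrime p.1 q.1 :=
          UFMx.relPrime_of_dvd hU ⟨p.2, hp.symm⟩ ⟨q.2, hq.symm⟩ hd
        have hcop2 : RelPrime p.2 q.2 :=
          UFMx.relPrime_of_dvd hU ⟨p.1, by rw [mul_comm]; exact hp.symm⟩
            ⟨q.1, by rw [mul_comm]; exact hq.symm⟩ hd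
        rw [hf.2 _ _ hcop1]
        by_cases hpq : (p, q) = (((1 : M), a), ((1 : M), b))
        · rw [if_pos hpq]
          have hp' : p = ((1 : M), a) := congrArg Prod.fst hpq
          have hq' : q = ((1 : M), b) := congrArg Prod.snd hpq
          rw [hp', hq']
          simp only [hf.1]
          ring
        · rw [if_neg hpq, add_zero]
          have hne : p.2 ≠ a ∨ q.2 ≠ b := by
            by_contra hcon
            push_neg at hcon
            apply hpq
            have hp1 : p.1 = 1 := by
              apply UFMx.mul_cancel hU (a := p.2)
              rw [mul_comm p.2 p.1, mul_one, hp]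
              exact hcon.1.symm
            have hq1 : q.1 = 1 := by
              apply UFMx.mul_cancel hU (a := q.2)
              rw [mul_comm q.2 q.1, mul_one, hq]
              exact hcon.2.symm
            exact Prod.ext (Prod.ext hp1 hcon.1) (Prod.ext hq1 hcon.2)
          have l1 : UFMx.fac hU p.2 ≤ UFMx.fac hU a :=
            (UFMx.dvd_iff_fac_le hU).1 ⟨p.1, by rw [mul_comm]; exact hp.symm⟩
          have l2 : UFMx.fac hU q.2 ≤ UFMx.fac hU b :=
            (UFMx.dvd_iff_fac_le hU).1 ⟨q.1, by rw [mul_comm]; exact hq.symm⟩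
          have hlt : Multiset.card (UFMx.fac hU (p.2 * q.2)) < N := by
            rw [← hN, UFMx.fac_mul hU, UFMx.fac_mul hU, Multiset.card_add, Multiset.card_add]
            have c1 := Multiset.card_le_card l1
            have c2 := Multiset.card_le_card l2
            rcases hne with h | h
            · have := Multiset.card_lt_card (lt_of_le_of_ne l1 (fun e => h (UFMx.fac_inj hU e)))
              omega
            · have := Multiset.card_lt_card (lt_of_le_of_ne l2 (fun e => h (UFMx.fac_inj hU e)))
              omega
          rw [ih _ hlt p.2 q.2 rfl hcop2]
          ring
      rw [Finset.sum_congr rfl (fun p hp => Finset.sum_congr rfl (fun q hq => key p hp q hq))]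
        at h0
      simp only [Finset.sum_add_distrib] at h0
      have e1 : ∑ p ∈ UFMx.Sfin hU a, ∑ q ∈ UFMx.Sfin hU b,
          (f p.1 * g p.2) * (f q.1 * g q.2) = 0 := by
        rw [← Finset.sum_mul_sum, ← UFMx.dmul_eq hU, ← UFMx.dmul_eq hU, hfg]
        simp [dOne, ha, hb]
      have e2 : ∑ p ∈ UFMx.Sfin hU a, ∑ q ∈ UFMx.Sfin hU b,
          (if (p, q) = (((1 : M), a), ((1 : M), b)) then g (a * b) - g a * g b else 0)
            = g (a * b) - g a * g b := by
        rw [← Finset.sum_product (f := fun r : (M × M) × (M × M) =>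
          if r = (((1 : M), a), ((1 : M), b)) then g (a * b) - g a * g b else 0)]
        rw [Finset.sum_eq_single_of_mem (((1 : M), a), ((1 : M), b)) ?_ ?_]
        · rw [if_pos rfl]
        · rw [Finset.mem_product, UFMx.mem_Sfin hU, UFMx.mem_Sfin hU]
          exact ⟨one_mul a, one_mul b⟩
        · intro r hr hne
          rw [if_neg hne]
      rw [e1, e2, zero_add] at h0
      exact sub_eq_zero.1 h0
  · -- torsion-freeness
    intro f n hf hn hpow
    funext a
    suffices H : ∀ k : ℕ, ∀ a : M, Multiset.card (UFMx.fac hU a) = k → f a = dOne M K a by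
      exact H _ a rfl
    intro k
    induction k using Nat.strong_induction_on with
    | _ k ih =>
      intro a hk
      by_cases ha : a = 1
      · subst ha; simp [dOne, hf.1]
      · have Hd : ∀ b : M, UFMx.fac hU b ≤ UFMx.fac hU a → b ≠ a → f b = dOne M K b := by
          intro b hb hba
          exact ih _ (by
            rw [← hk]
            exact Multiset.card_lt_card
              (lt_of_le_of_ne hb (fun e => hba (UFMx.fac_inj hU e)))) b rfl
        have h2 := (UFMx.dpow_eval hU f hf.1 ha Hd n).2
        rw [hpow] at h2
        have h3 : (n : K) * f a = 0 := by rw [← h2]; simp [dOne, ha]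
        have hn0 : (n : K) ≠ 0 := Nat.cast_ne_zero.2 (by omega)
        simp only [dOne]
        rw [if_neg ha]
        exact (mul_eq_zero.1 h3).resolve_left hn0
end

section
/- Let P(M) be the set of prime elements of M and let K⟦(X_p)_{p∈P(M)}⟧ be the ring of multivariate formal power series over K in indeterminates indexed by P(M). Then the map Φ : 𝒜(M) → K⟦(X_p)_{p∈P(M)}⟧ defined by Φ(f) = Σ_{a ∈ M} f(a)·∏_p X_p^{ord_p(a)} (where ord_p(a) is the exponent of p in the prime factorization of a) is an isomorphism of K-algebras. -/
open scoped BigOperators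

/-- The map Φ : 𝒜(M) → K⟦(X_p)_{p ∈ P(M)}⟧, Φ(f) = Σ_{a ∈ M} f(a) ∏_p X_p^{ord_p(a)}.
Its coefficient at a finitely supported exponent vector `d : P(M) →₀ ℕ` is the value
of `f` at the unique element `∏_p p^{d p}` of `M` whose prime factorization has
exponent vector `d`. -/
noncomputable def PhiMap (M K : Type*) [CommMonoid M] [Field K] (f : M → K) :
    MvPowerSeries {p : M // IsPrimeElem p} K :=
  fun d => f (d.prod fun p n => (p : M) ^ n)

section Aux
variable {M : Type*} [CommMonoid M]

lemma prime_of_irred (hU : IsUFM M) {p : M} (hp : Irreducible p) : IsPrimeElem p := by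
  refine ⟨hp.not_isUnit, fun a b hab => ?_⟩
  obtain ⟨c, hc⟩ := hab
  obtain ⟨la, hla, hla'⟩ := hU.1 a
  obtain ⟨lb, hlb, hlb'⟩ := hU.1 b
  obtain ⟨lc, hlc, hlc'⟩ := hU.1 c
  have heq : la + lb = p ::ₘ lc := by
    apply hU.2
    · intro x hx; rcases Multiset.mem_add.1 hx with h | h
      exacts [hla x h, hlb x h]
    · intro x hx; rcases Multiset.mem_cons.1 hx with h | h
      · exact h ▸ hp
      · exact hlc x h
    · rw [Multiset.prod_add, Multiset.prod_cons, hla', hlb', hlc', ← hc]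
  have hpm : p ∈ la + lb := heq ▸ Multiset.mem_cons_self p lc
  rcases Multiset.mem_add.1 hpm with h | h
  · exact Or.inl (hla' ▸ Multiset.dvd_prod h)
  · exact Or.inr (hlb' ▸ Multiset.dvd_prod h)

lemma cancel_of_ufm (hU : IsUFM M) {a b c : M} (h : a * b = a * c) : b = c := by
  obtain ⟨la, hla, hla'⟩ := hU.1 a
  obtain ⟨lb, hlb, hlb'⟩ := hU.1 b
  obtain ⟨lc, hlc, hlc'⟩ := hU.1 c
  have heq : la + lb = la + lc := by
    apply hU.2
    · intro x hx; rcases Multiset.mem_add.1 hx with h' | h'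
      exacts [hla x h', hlb x h']
    · intro x hx; rcases Multiset.mem_add.1 hx with h' | h'
      exacts [hla x h', hlc x h']
    · rw [Multiset.prod_add, Multiset.prod_add, hla', hlb', hlc', h]
  have hbc : lb = lc := add_left_cancel heq
  rw [← hlb', ← hlc', hbc]

lemma irred_of_prime (hU : IsUFM M) {p : M} (hp : IsPrimeElem p) : Irreducible p := by
  refine ⟨hp.1, fun a b hab => ?_⟩
  rcases hp.2 a b ⟨1, by rw [hab, mul_one]⟩ with ⟨c, hc⟩ | ⟨c, hc⟩
  · right
    have h2 : p * 1 = p * (c * b) := by rw [mul_one, ← mul_assoc, ← hc, ← hab]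
    have h1 : (1 : M) = c * b := cancel_of_ufm hU h2
    exact IsUnit.of_mul_eq_one (a := b) c (by rw [mul_comm, ← h1])
  · left
    have h2 : p * 1 = p * (c * a) := by rw [mul_one, ← mul_assoc, ← hc, mul_comm b a, ← hab]
    have h1 : (1 : M) = c * a := cancel_of_ufm hU h2
    exact IsUnit.of_mul_eq_one (a := a) c (by rw [mul_comm, ← h1])

/-- The exponent-vector-to-element map. -/
noncomputable def eFun (M : Type*) [CommMonoid M] :
    ({p : M // IsPrimeElem p} →₀ ℕ) → M :=
  fun d => d.prod fun p n => (p : M) ^ n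

lemma eFun_add (d₁ d₂ : {p : M // IsPrimeElem p} →₀ ℕ) :
    eFun M (d₁ + d₂) = eFun M d₁ * eFun M d₂ :=
  Finsupp.prod_add_index' (fun p => pow_zero (p : M)) (fun p m n => pow_add (p : M) m n)

lemma eFun_zero : eFun M (0 : {p : M // IsPrimeElem p} →₀ ℕ) = 1 :=
  Finsupp.prod_zero_index

lemma eFun_toMultiset (d : {p : M // IsPrimeElem p} →₀ ℕ) :
    eFun M d = ((Finsupp.toMultiset d).map Subtype.val).prod := by
  induction d using Finsupp.induction with
  | zero => simp [eFun_zero]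
  | single_add a b f ha hb ih =>
    rw [eFun_add, ih, map_add, Finsupp.toMultiset_single, Multiset.map_add,
      Multiset.prod_add, Multiset.map_nsmul, Multiset.prod_nsmul]
    congr 1
    show (Finsupp.single a b).prod (fun p n => (p : M) ^ n) = _
    simp [Finsupp.prod_single_index (h := fun (p : {p : M // IsPrimeElem p}) n => (p : M) ^ n) (pow_zero (a : M))]

lemma eFun_injective (hU : IsUFM M) : Function.Injective (eFun M) := by
  intro d₁ d₂ h
  have key : (Finsupp.toMultiset d₁).map Subtype.val
      = (Finsupp.toMultiset d₂).map Subtype.val := by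
    apply hU.2
    · rintro x hx
      obtain ⟨q, _, rfl⟩ := Multiset.mem_map.1 hx
      exact irred_of_prime hU q.2
    · rintro x hx
      obtain ⟨q, _, rfl⟩ := Multiset.mem_map.1 hx
      exact irred_of_prime hU q.2
    · rw [← eFun_toMultiset, ← eFun_toMultiset, h]
  classical
  have h2 : Finsupp.toMultiset d₁ = Finsupp.toMultiset d₂ :=
    Multiset.map_injective Subtype.val_injective key
  have h3 := congrArg Multiset.toFinsupp h2
  rwa [Finsupp.toMultiset_toFinsupp, Finsupp.toMultiset_toFinsupp] at h3

lemma eFun_surjective (hU : IsUFM M) : Function.Surjective (eFun M) := by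
  intro a
  obtain ⟨l, hl, hl'⟩ := hU.1 a
  set s : Multiset {p : M // IsPrimeElem p} :=
    l.attach.map (fun x => ⟨x.1, prime_of_irred hU (hl x.1 x.2)⟩) with hs
  classical
  refine ⟨Multiset.toFinsupp s, ?_⟩
  rw [eFun_toMultiset, Multiset.toFinsupp_toMultiset, hs, Multiset.map_map]
  have : l.attach.map (Subtype.val ∘ fun x => (⟨x.1, prime_of_irred hU (hl x.1 x.2)⟩ :
      {p : M // IsPrimeElem p})) = l.attach.map Subtype.val := rfl
  rw [this, Multiset.attach_map_val, hl']

end Aux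

/-!
STATEMENT 4: Φ : 𝒜(M) → K⟦(X_p)_{p ∈ P(M)}⟧ is an isomorphism of K-algebras.
-/

theorem statement4 {M K : Type*} [CommMonoid M] [Field K]
    (hT : TrivUnits M) (hU : IsUFM M) :
    Function.Bijective (PhiMap M K) ∧
    (PhiMap M K (dOne M K) = 1) ∧
    (∀ f g : M → K, PhiMap M K (f + g) = PhiMap M K f + PhiMap M K g) ∧
    (∀ (c : K) (f : M → K), PhiMap M K (c • f) = c • PhiMap M K f) ∧
    (∀ f g : M → K, PhiMap M K (dmul M K f g) = PhiMap M K f * PhiMap M K g) := by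
  classical
  have hebij : Function.Bijective (eFun M) := ⟨eFun_injective hU, eFun_surjective hU⟩
  have hPhi : PhiMap M K = fun f => f ∘ eFun M := rfl
  have heone : ∀ d, eFun M d = 1 ↔ d = 0 := by
    intro d
    constructor
    · intro h; exact eFun_injective hU (h.trans eFun_zero.symm)
    · rintro rfl; exact eFun_zero
  refine ⟨?_, ?_, ?_, ?_, ?_⟩
  · rw [hPhi]
    exact hebij.comp_right
  · ext d
    rw [MvPowerSeries.coeff_one]
    show dOne M K (eFun M d) = _
    simp only [dOne, heone d]
  · intro f g; rfl
  · intro c f; rfl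
  · intro f g
    ext d
    rw [MvPowerSeries.coeff_mul]
    show dmul M K f g (eFun M d) = _
    have hinj : Function.Injective
        (fun q : ({p : M // IsPrimeElem p} →₀ ℕ) × ({p : M // IsPrimeElem p} →₀ ℕ) =>
          (eFun M q.1, eFun M q.2)) := by
      intro q₁ q₂ h
      have h1 := congrArg Prod.fst h
      have h2 := congrArg Prod.snd h
      exact Prod.ext (eFun_injective hU h1) (eFun_injective hU h2)
    set T : Finset (M × M) :=
      (Finset.HasAntidiagonal.antidiagonal d).map ⟨_, hinj⟩ with hT'
    have hset : {p : M × M | p.1 * p.2 = eFun M d} = ↑T := by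
      ext ⟨x, y⟩
      simp only [Set.mem_setOf_eq, hT', Finset.coe_map, Set.mem_image, Finset.mem_coe,
        Finset.HasAntidiagonal.mem_antidiagonal, Function.Embedding.coeFn_mk, Prod.mk.injEq, Prod.exists]
      constructor
      · intro h
        obtain ⟨q₁, hq₁⟩ := eFun_surjective hU x
        obtain ⟨q₂, hq₂⟩ := eFun_surjective hU y
        refine ⟨q₁, q₂, ?_, hq₁, hq₂⟩
        apply eFun_injective hU
        rw [eFun_add, hq₁, hq₂, h]
      · rintro ⟨q₁, q₂, hsum, rfl, rfl⟩
        rw [← eFun_add, hsum]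
    have h1 : dmul M K f g (eFun M d)
        = ∑ᶠ p ∈ {p : M × M | p.1 * p.2 = eFun M d}, f p.1 * g p.2 := rfl
    rw [h1, hset, finsum_mem_coe_finset, hT', Finset.sum_map]
    rfl
end

section
/- For x ∈ A∖{0} and any family {y_i} ⊆ A∖{0}: if 𝒟(x) ⊆ ∪_i 𝒟(y_i), then 𝒟(x) ⊆ 𝒟(y_i) for some single index i. Consequently each set 𝒟(x), and in particular the whole space 𝓜(A) = 𝒟(1), is quasi-compact. -/
open Ideal

/-- A totally multiplicative arithmetic function on the monoid `I_A` of nonzero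
ideals of `A`, with values in `K`.  It is encoded as a function on all ideals,
with `f(A) = 1`, `f(𝔞𝔟) = f(𝔞) f(𝔟)` for nonzero ideals `𝔞, 𝔟`, and the
convention `f((0)) = 0`. -/
structure TotMult (A K : Type*) [CommRing A] [Field K] where
  toFun : Ideal A → K
  map_top : toFun ⊤ = 1
  map_mul : ∀ I J : Ideal A, I ≠ ⊥ → J ≠ ⊥ → toFun (I * J) = toFun I * toFun J
  map_bot : toFun ⊥ = 0

/-- The basic open set 𝒟(a) = {f ∈ 𝓜(A) : f(aA) ≠ 0}. -/
def Dset (A K : Type*) [CommRing A] [Field K] (a : A) : Set (TotMult A K) :=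
  {f | f.toFun (Ideal.span {a}) ≠ 0}

/-- The topology on 𝓜(A) whose closed sets are the sets
𝒱(S) = {f : f(aA) = 0 for all a ∈ S}, S ⊆ A∖{0}; equivalently, the topology with
basis of open sets the sets 𝒟(a) for a ∈ A∖{0} (the family of such 𝒟(a) is closed
under finite intersections, since 𝒟(a) ∩ 𝒟(b) = 𝒟(ab) and 𝒟(1) is the whole
space, so the topology it generates has exactly the arbitrary unions
∪_{a ∈ S} 𝒟(a) = complement of 𝒱(S) as its open sets). -/
instance totMultTopology (A K : Type*) [CommRing A] [Field K] :
    TopologicalSpace (TotMult A K) :=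
  TopologicalSpace.generateFrom {U | ∃ a : A, a ≠ 0 ∧ U = Dset A K a}

/-- 𝒵(f), the set of prime ideal zeros of `f`: maximal ideals `𝔭` with `f(𝔭) = 0`. -/
def Zset (A K : Type*) [CommRing A] [Field K] (f : TotMult A K) : Set (Ideal A) :=
  {p | p.IsMaximal ∧ f.toFun p = 0}

universe u

section Aux

variable {A K : Type*} [CommRing A] [IsDomain A] [IsDedekindDomain A] [Field K]

/-- The indicator arithmetic function of a set of primes. -/
noncomputable def indTM (A K : Type*) [CommRing A] [IsDomain A] [Field K]
    (S : Set (Ideal A)) : TotMult A K where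
  toFun I := open Classical in
    if I ≠ ⊥ ∧ ∀ P : Ideal A, P.IsPrime → I ≤ P → P ∈ S then 1 else 0
  map_top := by
    beta_reduce
    rw [if_pos]
    exact ⟨by simp, fun P hP hle => absurd (top_le_iff.mp hle) hP.ne_top⟩
  map_mul I J hI hJ := by
    beta_reduce
    have hIJ : I * J ≠ ⊥ := by
      simp [Ideal.mul_eq_bot, hI, hJ]
    have key : (∀ P : Ideal A, P.IsPrime → I * J ≤ P → P ∈ S) ↔
        ((∀ P : Ideal A, P.IsPrime → I ≤ P → P ∈ S) ∧
          (∀ P : Ideal A, P.IsPrime → J ≤ P → P ∈ S)) := by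
      constructor
      · intro h
        exact ⟨fun P hP hle => h P hP (le_trans Ideal.mul_le_left hle),
          fun P hP hle => h P hP (le_trans Ideal.mul_le_right hle)⟩
      · rintro ⟨h1, h2⟩ P hP hle
        rcases hP.mul_le.mp hle with h | h
        · exact h1 P hP h
        · exact h2 P hP h
    by_cases h1 : ∀ P : Ideal A, P.IsPrime → I ≤ P → P ∈ S
    · by_cases h2 : ∀ P : Ideal A, P.IsPrime → J ≤ P → P ∈ S
      · rw [if_pos ⟨hIJ, key.mpr ⟨h1, h2⟩⟩, if_pos ⟨hI, h1⟩, if_pos ⟨hJ, h2⟩, one_mul]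
      · rw [if_neg (fun hc => h2 (key.mp hc.2).2), if_pos ⟨hI, h1⟩, if_neg (fun hc => h2 hc.2), mul_zero]
    · rw [if_neg (fun hc => h1 (key.mp hc.2).1), if_neg (fun hc => h1 hc.2), zero_mul]
  map_bot := by
    beta_reduce
    rw [if_neg]
    intro hc
    exact hc.1 rfl

theorem indTM_ne_zero (S : Set (Ideal A)) (I : Ideal A) :
    (indTM A K S).toFun I ≠ 0 ↔
      (I ≠ ⊥ ∧ ∀ P : Ideal A, P.IsPrime → I ≤ P → P ∈ S) := by
  simp only [indTM]
  split <;> simp_all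

theorem TM_prod (f : TotMult A K) (s : Multiset (Ideal A)) (hs : ∀ p ∈ s, p ≠ ⊥) :
    f.toFun s.prod = (s.map f.toFun).prod := by
  induction s using Multiset.induction with
  | empty => simpa [Ideal.one_eq_top] using f.map_top
  | cons a s ih =>
    have ha : a ≠ ⊥ := hs a (Multiset.mem_cons_self a s)
    have hs' : ∀ p ∈ s, p ≠ ⊥ := fun p hp => hs p (Multiset.mem_cons_of_mem hp)
    have hsprod : s.prod ≠ ⊥ := by
      rw [← Ideal.zero_eq_bot]
      refine Multiset.prod_ne_zero ?_
      intro h0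
      exact hs' 0 h0 Ideal.zero_eq_bot
    rw [Multiset.prod_cons, f.map_mul a s.prod ha hsprod, ih hs', Multiset.map_cons,
      Multiset.prod_cons]

/-- `f(I) ≠ 0` iff `f` is nonzero on all primes over `I`. -/
theorem TM_ne_zero_iff (f : TotMult A K) {I : Ideal A} (hI : I ≠ ⊥) :
    f.toFun I ≠ 0 ↔ ∀ P : Ideal A, P.IsPrime → I ≤ P → f.toFun P ≠ 0 := by
  constructor
  · intro h P hP hle
    obtain ⟨J, rfl⟩ := Ideal.dvd_iff_le.mpr hle
    have hP0 : P ≠ ⊥ := fun e => hI (by simp [e])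
    have hJ0 : J ≠ ⊥ := fun e => hI (by simp [e])
    rw [f.map_mul P J hP0 hJ0] at h
    exact left_ne_zero_of_mul h
  · intro h
    obtain ⟨s, hsp, hassoc⟩ := UniqueFactorizationMonoid.exists_prime_factors I hI
    rw [associated_iff_eq] at hassoc
    have hsb : ∀ p ∈ s, p ≠ ⊥ := by
      intro p hp e
      exact (hsp p hp).ne_zero (by rw [e, Ideal.zero_eq_bot])
    rw [← hassoc, TM_prod f s hsb]
    rw [← Ideal.zero_eq_bot] at hI
    refine Multiset.prod_ne_zero ?_
    intro h0
    obtain ⟨p, hp, hfp⟩ := Multiset.mem_map.mp h0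
    have hple : I ≤ p := Ideal.dvd_iff_le.mp (by rw [← hassoc]; exact Multiset.dvd_prod hp)
    have hpprime : p.IsPrime := (Ideal.prime_iff_isPrime (hsb p hp)).mp (hsp p hp)
    exact h p hpprime hple hfp

theorem span_ne_bot {a : A} (ha : a ≠ 0) : (Ideal.span {a} : Ideal A) ≠ ⊥ := by
  simpa [Ideal.span_singleton_eq_bot] using ha

/-- The key covering lemma. -/
theorem keyLemma {ι : Sort*} (x : A) (hx : x ≠ 0) (y : ι → A) (hy : ∀ i, y i ≠ 0)
    (hc : Dset A K x ⊆ ⋃ i, Dset A K (y i)) : ∃ i, Dset A K x ⊆ Dset A K (y i) := by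
  set f0 : TotMult A K := indTM A K {P | Ideal.span {x} ≤ P} with hf0def
  have hf0 : f0 ∈ Dset A K x := by
    show f0.toFun (Ideal.span {x}) ≠ 0
    rw [hf0def, indTM_ne_zero]
    exact ⟨span_ne_bot hx, fun P hP h => h⟩
  obtain ⟨i, hi⟩ := Set.mem_iUnion.mp (hc hf0)
  refine ⟨i, fun g hg => ?_⟩
  have h1 := ((indTM_ne_zero _ _).mp hi).2
  have hyi : (Ideal.span {y i} : Ideal A) ≠ ⊥ := span_ne_bot (hy i)
  have hxb : (Ideal.span {x} : Ideal A) ≠ ⊥ := span_ne_bot hx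
  show g.toFun (Ideal.span {y i}) ≠ 0
  exact (TM_ne_zero_iff g hyi).mpr fun P hP hle =>
    (TM_ne_zero_iff g hxb).mp hg P hP (h1 P hP hle)

theorem Dset_mul {a b : A} (ha : a ≠ 0) (hb : b ≠ 0) :
    Dset A K (a * b) = Dset A K a ∩ Dset A K b := by
  ext f
  have hspan : (Ideal.span {a * b} : Ideal A) = Ideal.span {a} * Ideal.span {b} :=
    (Ideal.span_singleton_mul_span_singleton a b).symm
  simp only [Dset, Set.mem_setOf_eq, Set.mem_inter_iff, hspan,
    f.map_mul _ _ (span_ne_bot ha) (span_ne_bot hb), mul_ne_zero_iff]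

theorem totMult_basis :
    TopologicalSpace.IsTopologicalBasis
      {U : Set (TotMult A K) | ∃ a : A, a ≠ 0 ∧ U = Dset A K a} := by
  refine ⟨?_, ?_, rfl⟩
  · rintro U1 ⟨a, ha, rfl⟩ U2 ⟨b, hb, rfl⟩ f hf
    exact ⟨Dset A K (a * b), ⟨a * b, mul_ne_zero ha hb, rfl⟩,
      by rw [Dset_mul ha hb]; exact hf, by rw [Dset_mul ha hb]⟩
  · refine Set.eq_univ_of_forall fun f => ?_
    refine ⟨Dset A K 1, ⟨1, one_ne_zero, rfl⟩, ?_⟩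
    show f.toFun (Ideal.span {1}) ≠ 0
    rw [Ideal.span_singleton_one, f.map_top]
    exact one_ne_zero

theorem Dset_isCompact (z : A) (hz : z ≠ 0) : IsCompact (Dset A K z) := by
  refine isCompact_of_finite_subcover fun {ι'} U hU hcov => ?_
  have hsel : ∀ g : Dset A K z, ∃ (a : A) (i : ι'),
      a ≠ 0 ∧ g.1 ∈ Dset A K a ∧ Dset A K a ⊆ U i := by
    intro g
    obtain ⟨i, hi⟩ := Set.mem_iUnion.mp (hcov g.2)
    obtain ⟨v, ⟨a, ha, rfl⟩, hgv, hvu⟩ :=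
      totMult_basis.exists_subset_of_mem_open hi (hU i)
    exact ⟨a, i, ha, hgv, hvu⟩
  choose a idx ha hga hsub using hsel
  have hcov2 : Dset A K z ⊆ ⋃ g : Dset A K z, Dset A K (a g) := fun g hg =>
    Set.mem_iUnion.mpr ⟨⟨g, hg⟩, hga ⟨g, hg⟩⟩
  obtain ⟨g0, hg0⟩ := keyLemma z hz a ha hcov2
  exact ⟨{idx g0}, fun g hg =>
    Set.mem_biUnion (Finset.mem_singleton_self _) (hsub g0 (hg0 hg))⟩

end Aux

theorem statement8 (A K : Type*) [CommRing A] [IsDomain A] [IsDedekindDomain A]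
    (hA : ¬IsField A) [Field K] (x : A) (hx : x ≠ 0) :
    (∀ (ι : Type u) (y : ι → A), (∀ i, y i ≠ 0) →
      Dset A K x ⊆ ⋃ i, Dset A K (y i) → ∃ i, Dset A K x ⊆ Dset A K (y i)) ∧
    IsCompact (Dset A K x) ∧
    CompactSpace (TotMult A K) := by
  refine ⟨fun ι y hy hc => keyLemma x hx y hy hc, Dset_isCompact x hx, ⟨?_⟩⟩
  have huniv : (Set.univ : Set (TotMult A K)) = Dset A K 1 := by
    refine Set.eq_univ_of_forall ?_ |>.symm
    intro f
    show f.toFun (Ideal.span {1}) ≠ 0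
    rw [Ideal.span_singleton_one, f.map_top]
    exact one_ne_zero
  rw [huniv]
  exact Dset_isCompact 1 one_ne_zero
end

section
/- Let 𝔭₁, …, 𝔭_m be maximal ideals of A, let 𝔭_i^* = 𝔭_i ∖ {0}, and let P = 𝔭₁^* ∪ ⋯ ∪ 𝔭_m^* ⊆ A∖{0}. Then 𝓘(𝒱(P)) = P, where for Y ⊆ 𝓜(A), 𝓘(Y) = {a ∈ A∖{0} : f(aA) = 0 for all f ∈ Y} and 𝒱(P) = {f ∈ 𝓜(A) : f(aA) = 0 for all a ∈ P}. -/
open Ideal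

/-- 𝒱(S) = {f ∈ 𝓜(A) : f(aA) = 0 for all a ∈ S}, for S ⊆ A∖{0}. -/
def Vset (A K : Type*) [CommRing A] [Field K] (S : Set A) : Set (TotMult A K) :=
  {f | ∀ a ∈ S, f.toFun (Ideal.span {a}) = 0}

/-- 𝓘(Y) = {a ∈ A∖{0} : f(aA) = 0 for all f ∈ Y}, for Y ⊆ 𝓜(A). -/
def Iset (A K : Type*) [CommRing A] [Field K] (Y : Set (TotMult A K)) : Set A :=
  {a | a ≠ 0 ∧ ∀ f ∈ Y, f.toFun (Ideal.span {a}) = 0}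

/-!
STATEMENT 14: Let 𝔭₁, …, 𝔭_m be maximal ideals of A and
P = 𝔭₁^* ∪ ⋯ ∪ 𝔭_m^* ⊆ A∖{0} (where 𝔭ᵢ^* = 𝔭ᵢ ∖ {0}).  Then 𝓘(𝒱(P)) = P.
-/

theorem statement14 (A K : Type*) [CommRing A] [IsDomain A] [IsDedekindDomain A]
    (hA : ¬IsField A) [Field K] (m : ℕ) (p : Fin m → Ideal A)
    (hp : ∀ i, (p i).IsMaximal) :
    Iset A K (Vset A K {a : A | a ≠ 0 ∧ ∃ i, a ∈ p i}) =
      {a : A | a ≠ 0 ∧ ∃ i, a ∈ p i} := by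
  ext a
  simp only [Iset, Vset, Set.mem_setOf_eq]
  constructor
  · rintro ⟨ha, hf⟩
    refine ⟨ha, ?_⟩
    by_contra hc
    push_neg at hc
    classical
    have hbot : ∀ i : Fin m, ¬ (⊤ : Ideal A) ≤ p i :=
      fun i h => (hp i).ne_top (top_le_iff.mp h)
    set f : TotMult A K :=
      { toFun := fun I => if I ≠ ⊥ ∧ ∀ i, ¬ I ≤ p i then 1 else 0
        map_top := by
          beta_reduce
          rw [if_pos]
          exact ⟨by simp, hbot⟩
        map_mul := by
          intro I J hI hJ
          beta_reduce
          have hIJ : I * J ≠ ⊥ := by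
            rw [Ne, Ideal.mul_eq_bot]; tauto
          by_cases h1 : ∀ i, ¬ I ≤ p i
          · by_cases h2 : ∀ i, ¬ J ≤ p i
            · have h12 : ∀ i, ¬ I * J ≤ p i := by
                intro i hle
                rcases ((hp i).isPrime.mul_le).mp hle with h | h
                · exact h1 i h
                · exact h2 i h
              rw [if_pos ⟨hIJ, h12⟩, if_pos ⟨hI, h1⟩, if_pos ⟨hJ, h2⟩, one_mul]
            · push_neg at h2
              obtain ⟨i, hi⟩ := h2
              have hL : (if I * J ≠ ⊥ ∧ ∀ i, ¬ I * J ≤ p i then (1:K) else 0) = 0 := by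
                rw [if_neg]; rintro ⟨-, h⟩
                exact h i (le_trans (Ideal.mul_le_right) hi)
              have hR : (if J ≠ ⊥ ∧ ∀ i, ¬ J ≤ p i then (1:K) else 0) = 0 := by
                rw [if_neg]; rintro ⟨-, h⟩; exact h i hi
              rw [hL, hR, mul_zero]
          · push_neg at h1
            obtain ⟨i, hi⟩ := h1
            have hL : (if I * J ≠ ⊥ ∧ ∀ i, ¬ I * J ≤ p i then (1:K) else 0) = 0 := by
              rw [if_neg]; rintro ⟨-, h⟩
              exact h i (le_trans (Ideal.mul_le_left) hi)
            have hR : (if I ≠ ⊥ ∧ ∀ i, ¬ I ≤ p i then (1:K) else 0) = 0 := by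
              rw [if_neg]; rintro ⟨-, h⟩; exact h i hi
            rw [hL, hR, zero_mul]
        map_bot := by simp }
    have fval : ∀ I : Ideal A,
        f.toFun I = if I ≠ ⊥ ∧ ∀ i, ¬ I ≤ p i then (1 : K) else 0 := fun I => rfl
    have hfV : f ∈ Vset A K {a : A | a ≠ 0 ∧ ∃ i, a ∈ p i} := by
      intro b hb
      obtain ⟨hb0, i, hbi⟩ := hb
      rw [fval, if_neg]
      rintro ⟨-, h⟩
      exact h i ((Ideal.span_singleton_le_iff_mem _).mpr hbi)
    have hz := hf f hfV
    have hne : Ideal.span {a} ≠ ⊥ := by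
      simpa [Ideal.span_singleton_eq_bot] using ha
    rw [fval, if_pos] at hz
    · exact one_ne_zero hz
    · exact ⟨hne, fun i h => hc i ((Ideal.span_singleton_le_iff_mem _).mp h)⟩
  · rintro ⟨ha, i, hai⟩
    exact ⟨ha, fun f hf => hf a ⟨ha, i, hai⟩⟩
end

section
/- The Krull dimension of the topological space 𝓜(A) — the supremum of the lengths n of chains Z₀ ⊊ Z₁ ⊊ ⋯ ⊊ Z_n of irreducible closed subsets of 𝓜(A) — equals the cardinality of Max(A); in particular it is infinite if A has infinitely many maximal ideals, and equals n if A has exactly n maximal ideals. -/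
open Ideal

section Aux

open UniqueFactorizationMonoid TopologicalSpace
open scoped Classical

variable {A K : Type*} [CommRing A] [IsDomain A] [IsDedekindDomain A] [Field K]

theorem TotMult.eval_msprod (f : TotMult A K) (s : Multiset (Ideal A)) (hs : ∀ I ∈ s, I ≠ ⊥) :
    f.toFun s.prod = (s.map f.toFun).prod := by
  induction s using Multiset.induction with
  | empty => simpa [Ideal.one_eq_top] using f.map_top
  | cons a s ih =>
    have ha : a ≠ ⊥ := hs a (Multiset.mem_cons_self a s)
    have hs' : ∀ I ∈ s, I ≠ ⊥ := fun I hI => hs I (Multiset.mem_cons_of_mem hI)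
    have hsp : s.prod ≠ ⊥ := by
      rw [← Ideal.zero_eq_bot]
      exact Multiset.prod_ne_zero (fun h0 => hs' 0 h0 Ideal.zero_eq_bot)
    rw [Multiset.prod_cons, f.map_mul a s.prod ha hsp, ih hs', Multiset.map_cons,
      Multiset.prod_cons]

theorem TotMult.eval_eq_prod (f : TotMult A K) {I : Ideal A} (hI : I ≠ ⊥) :
    f.toFun I = ((normalizedFactors I).map f.toFun).prod := by
  have hI0 : I ≠ 0 := by rw [Ideal.zero_eq_bot]; exact hI
  conv_lhs => rw [← associated_iff_eq.mp (prod_normalizedFactors hI0)]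
  exact f.eval_msprod _ fun J hJ => by
    rw [← Ideal.zero_eq_bot]; exact (prime_of_normalized_factor J hJ).ne_zero

theorem TotMult.eval_eq_zero_iff (f : TotMult A K) {I : Ideal A} (hI : I ≠ ⊥) :
    f.toFun I = 0 ↔ ∃ p : Ideal A, p.IsMaximal ∧ I ≤ p ∧ f.toFun p = 0 := by
  rw [f.eval_eq_prod hI, Multiset.prod_eq_zero_iff]
  constructor
  · intro h
    obtain ⟨p, hp, hp0⟩ := Multiset.mem_map.mp h
    obtain ⟨hprime, hle⟩ := (Ideal.mem_normalizedFactors_iff hI).mp hp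
    have hpbot : p ≠ ⊥ := fun h => hI (le_bot_iff.mp (h ▸ hle))
    exact ⟨p, hprime.isMaximal hpbot, hle, hp0⟩
  · rintro ⟨p, hpm, hle, h0⟩
    exact Multiset.mem_map.mpr ⟨p, (Ideal.mem_normalizedFactors_iff hI).mpr ⟨hpm.isPrime, hle⟩, h0⟩

theorem TotMult.span_zero_iff (f : TotMult A K) (a : A) :
    f.toFun (Ideal.span {a}) = 0 ↔
      a = 0 ∨ ∃ p : Ideal A, p.IsMaximal ∧ a ∈ p ∧ f.toFun p = 0 := by
  rcases eq_or_ne a 0 with rfl | ha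
  · rw [show Ideal.span {(0 : A)} = ⊥ from Ideal.span_singleton_eq_bot.mpr rfl]
    simp [f.map_bot]
  · rw [f.eval_eq_zero_iff (by simpa [Ideal.span_singleton_eq_bot] using ha)]
    simp only [Ideal.span_singleton_le_iff_mem, ha, false_or]

variable (K) in
/-- The totally multiplicative function determined by prescribed values on maximal ideals. -/
noncomputable def totMultOf (g : Ideal A → K) : TotMult A K where
  toFun I := if I = ⊥ then 0 else ((normalizedFactors I).map g).prod
  map_top := by
    have htop : (⊤ : Ideal A) ≠ ⊥ := by
      intro h
      exact one_ne_zero (α := A) (by rw [← Ideal.mem_bot, ← h]; trivial)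
    show (if (⊤ : Ideal A) = ⊥ then (0 : K) else _) = 1
    rw [if_neg htop]
    rw [← Ideal.one_eq_top, UniqueFactorizationMonoid.normalizedFactors_one]
    simp
  map_mul I J hI hJ := by
    have hI0 : I ≠ 0 := by rw [Ideal.zero_eq_bot]; exact hI
    have hJ0 : J ≠ 0 := by rw [Ideal.zero_eq_bot]; exact hJ
    have hIJ : I * J ≠ ⊥ := by rw [← Ideal.zero_eq_bot]; exact mul_ne_zero hI0 hJ0
    show (if I * J = ⊥ then (0 : K) else _) = (if I = ⊥ then (0 : K) else _) * (if J = ⊥ then (0 : K) else _)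
    rw [if_neg hIJ, if_neg hI, if_neg hJ, normalizedFactors_mul hI0 hJ0,
      Multiset.map_add, Multiset.prod_add]
  map_bot := if_pos rfl

theorem totMultOf_apply (g : Ideal A → K) (I : Ideal A) :
    (totMultOf K g).toFun I = if I = ⊥ then 0 else ((normalizedFactors I).map g).prod := rfl

theorem totMultOf_eval_maximal (hA : ¬IsField A) (g : Ideal A → K) {p : Ideal A}
    (hp : p.IsMaximal) : (totMultOf K g).toFun p = g p := by
  have hp0 : p ≠ ⊥ := Ring.ne_bot_of_isMaximal_of_not_isField hp hA
  have hirr : Irreducible p := ((Ideal.prime_iff_isPrime hp0).mpr hp.isPrime).irreducible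
  classical
  rw [totMultOf_apply, if_neg hp0,
    UniqueFactorizationMonoid.normalizedFactors_irreducible hirr, normalize_eq,
    Multiset.map_singleton, Multiset.prod_singleton]

variable (A K) in
theorem isBasis_Dset :
    IsTopologicalBasis {U : Set (TotMult A K) | ∃ a : A, a ≠ 0 ∧ U = Dset A K a} := by
  constructor
  · rintro t₁ ⟨a, ha, rfl⟩ t₂ ⟨b, hb, rfl⟩ f ⟨hfa, hfb⟩
    have hab : ∀ g : TotMult A K,
        g.toFun (Ideal.span {a * b}) = g.toFun (Ideal.span {a}) * g.toFun (Ideal.span {b}) := by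
      intro g
      rw [← Ideal.span_singleton_mul_span_singleton]
      exact g.map_mul _ _ (by simpa [Ideal.span_singleton_eq_bot] using ha)
        (by simpa [Ideal.span_singleton_eq_bot] using hb)
    refine ⟨Dset A K (a * b), ⟨a * b, mul_ne_zero ha hb, rfl⟩, ?_, ?_⟩
    · show f.toFun (Ideal.span {a * b}) ≠ 0
      rw [hab f]
      exact mul_ne_zero hfa hfb
    · intro g hg
      have hg' : g.toFun (Ideal.span {a}) * g.toFun (Ideal.span {b}) ≠ 0 := by
        rw [← hab g]; exact hg
      exact ⟨fun h => hg' (by rw [h, zero_mul]), fun h => hg' (by rw [h, mul_zero])⟩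
  · rw [Set.sUnion_eq_univ_iff]
    intro f
    refine ⟨Dset A K 1, ⟨1, one_ne_zero, rfl⟩, ?_⟩
    show f.toFun (Ideal.span {(1 : A)}) ≠ 0
    rw [Ideal.span_singleton_one, f.map_top]
    exact one_ne_zero
  · rfl

theorem totMult_mem_closure_singleton {f g : TotMult A K} :
    g ∈ closure {f} ↔
      ∀ a : A, f.toFun (Ideal.span {a}) = 0 → g.toFun (Ideal.span {a}) = 0 := by
  rw [(isBasis_Dset A K).mem_closure_iff]
  constructor
  · intro h a hfa
    by_contra hga
    rcases eq_or_ne a 0 with rfl | ha0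
    · exact hga (by
        rw [show Ideal.span {(0 : A)} = ⊥ from Ideal.span_singleton_eq_bot.mpr rfl]
        exact g.map_bot)
    obtain ⟨x, hxD, hxf⟩ := h (Dset A K a) ⟨a, ha0, rfl⟩ hga
    rw [Set.mem_singleton_iff] at hxf
    exact (hxf ▸ hxD) hfa
  · rintro h o ⟨a, ha0, rfl⟩ hgo
    refine ⟨f, ?_, rfl⟩
    intro hfa
    exact hgo (h a hfa)

theorem isOpen_Dset (a : A) : IsOpen (Dset A K a) := by
  rcases eq_or_ne a 0 with rfl | ha
  · convert isOpen_empty (X := TotMult A K)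
    ext f
    simp only [Dset, Set.mem_setOf_eq, Set.mem_empty_iff_false, iff_false, not_not]
    rw [show Ideal.span {(0 : A)} = ⊥ from Ideal.span_singleton_eq_bot.mpr rfl]
    exact f.map_bot
  · exact (isBasis_Dset A K).isOpen ⟨a, ha, rfl⟩

theorem isClosed_iff_Vset {Z : Set (TotMult A K)} :
    IsClosed Z ↔ ∃ S : Set A, Z = {f | ∀ a ∈ S, f.toFun (Ideal.span {a}) = 0} := by
  constructor
  · intro hZ
    refine ⟨{a | a ≠ 0 ∧ Dset A K a ⊆ Zᶜ}, ?_⟩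
    ext f
    simp only [Set.mem_setOf_eq]
    constructor
    · rintro hf a ⟨_, haZ⟩
      by_contra hfa
      exact haZ hfa hf
    · intro hf
      by_contra hfZ
      obtain ⟨o, ⟨a, ha0, rfl⟩, hfo, hoU⟩ :=
        (isBasis_Dset A K).isOpen_iff.mp hZ.isOpen_compl f hfZ
      exact hfo (hf a ⟨ha0, hoU⟩)
  · rintro ⟨S, rfl⟩
    have heq : {f : TotMult A K | ∀ a ∈ S, f.toFun (Ideal.span {a}) = 0}
        = (⋃ a ∈ S, Dset A K a)ᶜ := by
      ext f
      simp [Dset]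
    rw [heq]
    exact (isOpen_iUnion fun a => isOpen_iUnion fun _ => isOpen_Dset a).isClosed_compl

theorem exists_avoid (hA : ¬IsField A) {p : Ideal A} (hp : p.IsMaximal)
    (T : Finset (Ideal A)) (hT : ∀ q ∈ T, q.IsMaximal) (hpT : p ∉ T) :
    ∃ a : A, a ∈ p ∧ a ≠ 0 ∧ ∀ q ∈ T, a ∉ q := by
  classical
  have hp0 : p ≠ ⊥ := Ring.ne_bot_of_isMaximal_of_not_isField hp hA
  by_contra h
  push_neg at h
  have hsub : (p : Set A) ⊆ ⋃ q ∈ ((insert ⊥ T : Finset (Ideal A)) : Set (Ideal A)),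
      ((id q : Ideal A) : Set A) := by
    intro a ha
    rcases eq_or_ne a 0 with rfl | ha0
    · have h1 : (⊥ : Ideal A) ∈ ((insert ⊥ T : Finset (Ideal A)) : Set (Ideal A)) := by simp
      have h2 : (0 : A) ∈ ((id (⊥ : Ideal A) : Ideal A) : Set A) := by simp
      exact Set.mem_biUnion h1 h2
    · obtain ⟨q, hq, haq⟩ := h a ha ha0
      have h1 : q ∈ ((insert ⊥ T : Finset (Ideal A)) : Set (Ideal A)) := by simp [hq]
      exact Set.mem_biUnion h1 haq
  have hprime : ∀ i ∈ (insert ⊥ T : Finset (Ideal A)), i ≠ (⊥ : Ideal A) → i ≠ ⊥ →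
      (id i : Ideal A).IsPrime := by
    intro i hi hne _
    rcases Finset.mem_insert.mp hi with rfl | hiT
    · exact absurd rfl hne
    · exact (hT i hiT).isPrime
  obtain ⟨q, hq, hle⟩ := (Ideal.subset_union_prime (R := A)
    (s := insert ⊥ T) (f := id) ⊥ ⊥ hprime).mp hsub
  rcases Finset.mem_insert.mp hq with rfl | hqT
  · exact hp0 (le_bot_iff.mp hle)
  · have : p = q := hp.eq_of_le (hT q hqT).ne_top hle
    exact hpT (this ▸ hqT)

theorem isClosed_Cp (hA : ¬IsField A) (hfin : {p : Ideal A | p.IsMaximal}.Finite)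
    {p : Ideal A} (hp : p.IsMaximal) :
    IsClosed {f : TotMult A K | f.toFun p = 0} := by
  classical
  rw [← isOpen_compl_iff, (isBasis_Dset A K).isOpen_iff]
  intro f hf
  rw [Set.mem_compl_iff, Set.mem_setOf_eq] at hf
  obtain ⟨a, hap, ha0, ha⟩ := exists_avoid hA hp (hfin.toFinset.erase p)
    (fun q hq => hfin.mem_toFinset.mp (Finset.mem_of_mem_erase hq)) (Finset.notMem_erase p _)
  refine ⟨Dset A K a, ⟨a, ha0, rfl⟩, ?_, ?_⟩
  · show f.toFun (Ideal.span {a}) ≠ 0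
    intro hfa0
    rcases (f.span_zero_iff a).mp hfa0 with rfl | ⟨q, hqm, haq, hq0⟩
    · exact ha0 rfl
    · rcases eq_or_ne q p with rfl | hqp
      · exact hf hq0
      · exact ha q (Finset.mem_erase.mpr ⟨hqp, hfin.mem_toFinset.mpr hqm⟩) haq
  · intro g hg
    rw [Set.mem_compl_iff, Set.mem_setOf_eq]
    intro hgp
    exact hg ((g.span_zero_iff a).mpr (Or.inr ⟨p, hp, hap, hgp⟩))

theorem irred_closed_eq (hA : ¬IsField A) (hfin : {p : Ideal A | p.IsMaximal}.Finite)
    (Z : IrreducibleCloseds (TotMult A K)) :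
    Z.carrier = {f : TotMult A K |
      ∀ p ∈ hfin.toFinset.filter (fun p => ∀ g ∈ Z.carrier, g.toFun p = 0), f.toFun p = 0} := by
  classical
  apply Set.Subset.antisymm
  · intro f hf p hp
    exact (Finset.mem_filter.mp hp).2 f hf
  · obtain ⟨S, hS⟩ := isClosed_iff_Vset.mp Z.isClosed'
    intro f hf
    rw [hS]
    intro a haS
    rcases eq_or_ne a 0 with rfl | ha0
    · rw [show Ideal.span {(0 : A)} = ⊥ from Ideal.span_singleton_eq_bot.mpr rfl]
      exact f.map_bot
    · let t : Finset (Set (TotMult A K)) :=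
        (hfin.toFinset.filter (fun q => a ∈ q)).image
          (fun q => {g : TotMult A K | g.toFun q = 0})
      have ht : ∀ z, z ∈ t ↔ ∃ q ∈ hfin.toFinset.filter (fun q => a ∈ q),
          {g : TotMult A K | g.toFun q = 0} = z := fun z => Finset.mem_image
      have hclosed : ∀ z ∈ t, IsClosed z := by
        intro z hz
        obtain ⟨q, hq, rfl⟩ := (ht z).mp hz
        exact isClosed_Cp hA hfin (hfin.mem_toFinset.mp (Finset.mem_filter.mp hq).1)
      have hcover : Z.carrier ⊆ ⋃₀ ↑t := by
        intro g hg
        have hg' : ∀ b ∈ S, g.toFun (Ideal.span {b}) = 0 := by rw [hS] at hg; exact hg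
        obtain ⟨q, hqm, haq, hq0⟩ := ((g.span_zero_iff a).mp (hg' a haS)).resolve_left ha0
        exact Set.mem_sUnion.mpr ⟨{x : TotMult A K | x.toFun q = 0},
          Finset.mem_coe.mpr ((ht _).mpr ⟨q,
            Finset.mem_filter.mpr ⟨hfin.mem_toFinset.mpr hqm, haq⟩, rfl⟩), hq0⟩
      obtain ⟨z, hzt, hZz⟩ :=
        (isIrreducible_iff_sUnion_isClosed.mp Z.isIrreducible') t hclosed hcover
      obtain ⟨q, hq, rfl⟩ := (ht z).mp hzt
      obtain ⟨hqfin, haq⟩ := Finset.mem_filter.mp hq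
      have hq0 : f.toFun q = 0 :=
        hf q (Finset.mem_filter.mpr ⟨hqfin, fun g hg => hZz hg⟩)
      exact (f.span_zero_iff a).mpr
        (Or.inr ⟨q, hfin.mem_toFinset.mp hqfin, haq, hq0⟩)

variable (K) in
noncomputable def hFn (T : Finset (Ideal A)) : TotMult A K :=
  totMultOf K (fun q => if q ∈ T then 0 else 1)

theorem hFn_eval (hA : ¬IsField A) (T : Finset (Ideal A)) {p : Ideal A} (hp : p.IsMaximal) :
    (hFn K T).toFun p = if p ∈ T then 0 else 1 :=
  totMultOf_eval_maximal hA _ hp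

theorem hFn_span_zero_iff (hA : ¬IsField A) {T : Finset (Ideal A)}
    (hT : ∀ q ∈ T, q.IsMaximal) (a : A) :
    (hFn K T).toFun (Ideal.span {a}) = 0 ↔ a = 0 ∨ ∃ q ∈ T, a ∈ q := by
  rw [TotMult.span_zero_iff]
  refine or_congr_right ?_
  constructor
  · rintro ⟨p, hpm, hap, hp0⟩
    classical
    rw [hFn_eval hA T hpm] at hp0
    by_cases hpT : p ∈ T
    · exact ⟨p, hpT, hap⟩
    · rw [if_neg hpT] at hp0
      exact absurd hp0 one_ne_zero
  · rintro ⟨q, hqT, haq⟩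
    refine ⟨q, hT q hqT, haq, ?_⟩
    classical
    rw [hFn_eval hA T (hT q hqT), if_pos hqT]

theorem mem_closure_hFn (hA : ¬IsField A) {T T' : Finset (Ideal A)}
    (hT : ∀ q ∈ T, q.IsMaximal) (hT' : ∀ q ∈ T', q.IsMaximal) (hsub : T ⊆ T') :
    hFn K T' ∈ closure {hFn K T} := by
  rw [totMult_mem_closure_singleton]
  intro a ha
  rw [hFn_span_zero_iff hA hT] at ha
  rw [hFn_span_zero_iff hA hT']
  refine ha.imp id ?_
  rintro ⟨q, hq, haq⟩
  exact ⟨q, hsub hq, haq⟩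

theorem not_mem_closure_hFn (hA : ¬IsField A) {T T' : Finset (Ideal A)}
    (hT : ∀ q ∈ T, q.IsMaximal) (hT' : ∀ q ∈ T', q.IsMaximal) {p : Ideal A}
    (hp : p.IsMaximal) (hpT' : p ∈ T') (hpT : p ∉ T) :
    hFn K T ∉ closure {hFn K T'} := by
  obtain ⟨a, hap, ha0, ha⟩ := exists_avoid hA hp T hT hpT
  rw [totMult_mem_closure_singleton]
  push_neg
  refine ⟨a, (hFn_span_zero_iff hA hT' a).mpr (Or.inr ⟨p, hpT', hap⟩), ?_⟩
  intro h
  rcases (hFn_span_zero_iff hA hT a).mp h with rfl | ⟨q, hq, haq⟩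
  · exact ha0 rfl
  · exact ha q hq haq

theorem exists_ltSeries (hA : ¬IsField A) (K : Type*) [Field K] (m : ℕ)
    (P : Fin m → Ideal A) (hinj : Function.Injective P) (hmax : ∀ i, (P i).IsMaximal) :
    ∃ p : LTSeries (IrreducibleCloseds (TotMult A K)), p.length = m := by
  classical
  set T : Fin (m + 1) → Finset (Ideal A) :=
    fun i => (Finset.univ.filter (fun j : Fin m => (i : ℕ) ≤ (j : ℕ))).image P with hT
  have hTmax : ∀ i, ∀ q ∈ T i, q.IsMaximal := by
    intro i q hq
    obtain ⟨j, _, rfl⟩ := Finset.mem_image.mp hq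
    exact hmax j
  have hTsub : ∀ i : Fin m, T i.succ ⊆ T i.castSucc := by
    intro i q hq
    obtain ⟨j, hj, rfl⟩ := Finset.mem_image.mp hq
    refine Finset.mem_image.mpr ⟨j, ?_, rfl⟩
    simp only [Finset.mem_filter, Finset.mem_univ, true_and, Fin.val_succ,
      Fin.coe_castSucc] at hj ⊢
    omega
  have hmem : ∀ i : Fin m, P i ∈ T i.castSucc := by
    intro i
    refine Finset.mem_image.mpr ⟨i, ?_, rfl⟩
    simp
  have hnot : ∀ i : Fin m, P i ∉ T i.succ := by
    intro i h
    obtain ⟨j, hj, hPj⟩ := Finset.mem_image.mp h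
    have : j = i := hinj hPj
    subst this
    simp only [Finset.mem_filter, Finset.mem_univ, true_and, Fin.val_succ] at hj
    omega
  let Z : Fin (m + 1) → IrreducibleCloseds (TotMult A K) := fun i =>
    ⟨closure {hFn K (T i)}, isIrreducible_singleton.closure, isClosed_closure⟩
  refine ⟨⟨m, Z, ?_⟩, rfl⟩
  intro i
  have hle : Z i.castSucc ≤ Z i.succ := by
    show (Z i.castSucc).carrier ⊆ (Z i.succ).carrier
    exact closure_minimal (Set.singleton_subset_iff.mpr
      (mem_closure_hFn hA (hTmax i.succ) (hTmax i.castSucc) (hTsub i))) isClosed_closure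
  refine lt_of_le_of_ne hle ?_
  intro hEq
  have h1 : hFn K (T i.succ) ∈ (Z i.succ).carrier := subset_closure rfl
  have h2 : hFn K (T i.succ) ∉ (Z i.castSucc).carrier :=
    not_mem_closure_hFn hA (hTmax i.succ) (hTmax i.castSucc) (hmax i) (hmem i) (hnot i)
  rw [hEq] at h2
  exact h2 h1

end Aux

open TopologicalSpace Order

/-!
STATEMENT 15: The Krull dimension of the topological space 𝓜(A) (the supremum of
lengths of chains of irreducible closed subsets) equals the cardinality of Max(A):
it is n if A has exactly n maximal ideals, and infinite (= ⊤) if A has infinitely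
many maximal ideals.
-/

theorem statement15 (A K : Type*) [CommRing A] [IsDomain A] [IsDedekindDomain A]
    (hA : ¬IsField A) [Field K] :
    (∀ (hfin : {p : Ideal A | p.IsMaximal}.Finite),
      topologicalKrullDim (TotMult A K) = hfin.toFinset.card) ∧
    ({p : Ideal A | p.IsMaximal}.Infinite →
      topologicalKrullDim (TotMult A K) = ⊤) := by
  constructor
  · intro hfin
    classical
    set n := hfin.toFinset.card with hn
    -- lower bound: a chain of length n
    have hlow : (n : WithBot ℕ∞) ≤ topologicalKrullDim (TotMult A K) := by
      obtain ⟨p, hp⟩ := exists_ltSeries hA K n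
        (fun i => ((hfin.toFinset.equivFin.symm i : {x // x ∈ hfin.toFinset}) : Ideal A))
        (fun i j h => hfin.toFinset.equivFin.symm.injective (Subtype.ext h))
        (fun i => hfin.mem_toFinset.mp (hfin.toFinset.equivFin.symm i).2)
      rw [show topologicalKrullDim (TotMult A K)
        = Order.krullDim (IrreducibleCloseds (TotMult A K)) from rfl]
      exact hp ▸ Order.LTSeries.length_le_krullDim p
    -- upper bound via strictly monotone map into `Fin (n+1)`
    have hup : topologicalKrullDim (TotMult A K) ≤ (n : WithBot ℕ∞) := by
      set TZ : IrreducibleCloseds (TotMult A K) → Finset (Ideal A) :=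
        fun Z => hfin.toFinset.filter (fun p => ∀ g ∈ Z.carrier, g.toFun p = 0) with hTZ
      have hcard : ∀ Z, (TZ Z).card ≤ n := fun Z => Finset.card_le_card (Finset.filter_subset _ _)
      have hmono : ∀ {Z₁ Z₂ : IrreducibleCloseds (TotMult A K)}, Z₁ < Z₂ →
          (TZ Z₂).card < (TZ Z₁).card := by
        intro Z₁ Z₂ hlt
        have hZle : Z₁.carrier ⊆ Z₂.carrier := hlt.le
        have hsub : TZ Z₂ ⊆ TZ Z₁ := by
          intro p hp
          obtain ⟨h1, h2⟩ := Finset.mem_filter.mp hp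
          exact Finset.mem_filter.mpr ⟨h1, fun g hg => h2 g (hZle hg)⟩
        refine Finset.card_lt_card (Finset.ssubset_iff_subset_ne.mpr ⟨hsub, ?_⟩)
        intro hEq
        apply hlt.ne
        have hc : Z₁.carrier = Z₂.carrier := by
          rw [irred_closed_eq hA hfin Z₁, irred_closed_eq hA hfin Z₂]
          show {f : TotMult A K | ∀ p ∈ TZ Z₁, f.toFun p = 0}
            = {f : TotMult A K | ∀ p ∈ TZ Z₂, f.toFun p = 0}
          rw [hEq]
        exact SetLike.coe_injective hc
      have hφ : StrictMono (fun Z : IrreducibleCloseds (TotMult A K) =>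
          (⟨n - (TZ Z).card, by have := hcard Z; omega⟩ : Fin (n + 1))) := by
        intro Z₁ Z₂ hlt
        have h1 := hmono hlt
        have h2 := hcard Z₁
        exact Fin.mk_lt_mk.mpr (by omega)
      rw [show topologicalKrullDim (TotMult A K)
        = Order.krullDim (IrreducibleCloseds (TotMult A K)) from rfl]
      refine le_trans (Order.krullDim_le_of_strictMono _ hφ) ?_
      rw [Order.krullDim_eq_iSup_length]
      refine (WithBot.coe_le_coe).mpr (iSup_le fun p => ?_)
      have : p.length + 1 ≤ n + 1 := by
        simpa using Fintype.card_le_of_injective _ p.strictMono.injective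
      exact_mod_cast Nat.lt_succ_iff.mp (Nat.lt_of_lt_of_le (Nat.lt_succ_self _) this)
    exact le_antisymm hup hlow
  · intro hinf
    have hchains : ∀ m : ℕ,
        ∃ p : LTSeries (IrreducibleCloseds (TotMult A K)), p.length = m := by
      intro m
      have e := hinf.natEmbedding
      refine exists_ltSeries hA K m (fun i => (e (i : ℕ) : {p : Ideal A // p.IsMaximal})) ?_
        (fun i => (e (i : ℕ)).2)
      intro i j h
      exact Fin.val_injective (e.injective (Subtype.ext h))
    haveI : InfiniteDimensionalOrder (IrreducibleCloseds (TotMult A K)) := ⟨hchains⟩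
    rw [show topologicalKrullDim (TotMult A K)
      = Order.krullDim (IrreducibleCloseds (TotMult A K)) from rfl]
    exact Order.krullDim_eq_top
end

section
/- The topological space 𝓜(A) is a Noetherian topological space (every descending chain of closed subsets stabilizes) if and only if A has only finitely many maximal ideals. -/
open Ideal

section Aux

variable {A K : Type*} [CommRing A] [IsDomain A] [IsDedekindDomain A] [Field K]

open Classical in
/-- The indicator arithmetic function of a set `T` of prime ideals: value `1`
on nonzero ideals not contained in any member of `T`, and `0` otherwise. -/
noncomputable def indMult (T : Set (Ideal A)) (K : Type*) [Field K]
    (hT : ∀ p ∈ T, p.IsPrime) : TotMult A K where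
  toFun I := if I ≠ ⊥ ∧ ∀ p ∈ T, ¬ I ≤ p then 1 else 0
  map_top := by
    rw [if_pos]
    refine ⟨bot_lt_top.ne', fun p hp hle => (hT p hp).ne_top (top_le_iff.mp hle)⟩
  map_mul := by
    intro I J hI hJ
    have hIJ : I * J ≠ ⊥ := by
      rw [Ne, Ideal.mul_eq_bot]
      tauto
    by_cases h1 : ∀ p ∈ T, ¬ I ≤ p
    · by_cases h2 : ∀ p ∈ T, ¬ J ≤ p
      · have hc : I * J ≠ ⊥ ∧ ∀ p ∈ T, ¬ I * J ≤ p :=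
          ⟨hIJ, fun p hp hle => ((hT p hp).mul_le.mp hle).elim (h1 p hp) (h2 p hp)⟩
        rw [if_pos hc, if_pos ⟨hI, h1⟩, if_pos ⟨hJ, h2⟩, mul_one]
      · have hc : ¬ (I * J ≠ ⊥ ∧ ∀ p ∈ T, ¬ I * J ≤ p) := by
          push_neg at h2 ⊢
          obtain ⟨p, hp, hle⟩ := h2
          exact fun _ => ⟨p, hp, (hT p hp).mul_le.mpr (Or.inr hle)⟩
        have hcJ : ¬ (J ≠ ⊥ ∧ ∀ p ∈ T, ¬ J ≤ p) := by
          push_neg at h2 ⊢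
          exact fun _ => h2
        rw [if_neg hc, if_neg hcJ, mul_zero]
    · have hc : ¬ (I * J ≠ ⊥ ∧ ∀ p ∈ T, ¬ I * J ≤ p) := by
        push_neg at h1 ⊢
        obtain ⟨p, hp, hle⟩ := h1
        exact fun _ => ⟨p, hp, (hT p hp).mul_le.mpr (Or.inl hle)⟩
      have hcI : ¬ (I ≠ ⊥ ∧ ∀ p ∈ T, ¬ I ≤ p) := by
        push_neg at h1 ⊢
        exact fun _ => h1
      rw [if_neg hc, if_neg hcI, zero_mul]
  map_bot := by
    rw [if_neg]
    rintro ⟨h, -⟩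
    exact h rfl

/-- If `f(I) ≠ 0` would follow from the nonvanishing of `f` on all maximal
ideals containing `I`. -/
theorem totMult_ne_zero {f : TotMult A K} :
    ∀ I : Ideal A, I ≠ ⊥ → (∀ p : Ideal A, p.IsMaximal → I ≤ p → f.toFun p ≠ 0) →
      f.toFun I ≠ 0 := by
  intro I
  refine UniqueFactorizationMonoid.induction_on_prime
    (P := fun J : Ideal A => J ≠ ⊥ → (∀ p : Ideal A, p.IsMaximal → J ≤ p → f.toFun p ≠ 0) →
      f.toFun J ≠ 0) I ?_ ?_ ?_
  · intro h _
    exact absurd Ideal.zero_eq_bot h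
  · intro x hx _ _
    rw [Ideal.isUnit_iff] at hx
    rw [hx, f.map_top]
    exact one_ne_zero
  · intro J q hJ hq IH _ hall
    have hq0 : q ≠ ⊥ := by
      simpa [Ideal.zero_eq_bot] using hq.ne_zero
    have hqP : q.IsPrime := Ideal.isPrime_of_prime hq
    have hqM : q.IsMaximal := hqP.isMaximal hq0
    have hJ0 : J ≠ ⊥ := by
      simpa [Ideal.zero_eq_bot] using hJ
    rw [f.map_mul q J hq0 hJ0]
    refine mul_ne_zero ?_ ?_
    · exact hall q hqM Ideal.mul_le_left
    · exact IH hJ0 fun p hp hle => hall p hp (le_trans Ideal.mul_le_right hle)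

/-- Description of the basic open set `𝒟(a)` in terms of the maximal ideals
containing `a`. -/
theorem Dset_eq (K : Type*) [Field K] (a : A) (ha : a ≠ 0) :
    Dset A K a = {f : TotMult A K | ∀ p : Ideal A, p.IsMaximal → a ∈ p → f.toFun p ≠ 0} := by
  ext f
  constructor
  · intro hf p hp hap
    have hle : Ideal.span {a} ≤ p := (Ideal.span_singleton_le_iff_mem _).mpr hap
    obtain ⟨J, hJ⟩ := Ideal.dvd_iff_le.mpr hle
    have hsne : Ideal.span ({a} : Set A) ≠ ⊥ := by
      simpa [Ideal.span_singleton_eq_bot] using ha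
    have hp0 : p ≠ ⊥ := by
      rintro rfl
      rw [bot_mul] at hJ
      exact hsne hJ
    have hJ0 : J ≠ ⊥ := by
      rintro rfl
      rw [mul_bot] at hJ
      exact hsne hJ
    have := f.map_mul p J hp0 hJ0
    rw [← hJ] at this
    intro hzero
    apply hf
    rw [this, hzero, zero_mul]
  · intro hf
    refine totMult_ne_zero _ ?_ ?_
    · simpa [Ideal.span_singleton_eq_bot] using ha
    · intro p hp hle
      exact hf p hp ((Ideal.span_singleton_le_iff_mem _).mp hle)

theorem Dset_isOpen (K : Type*) [Field K] (a : A) (ha : a ≠ 0) :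
    IsOpen (Dset A K a) :=
  TopologicalSpace.GenerateOpen.basic _ ⟨a, ha, rfl⟩

end Aux

/-!
STATEMENT 16: The topological space 𝓜(A) is a Noetherian topological space if and
only if A has only finitely many maximal ideals.
-/

theorem statement16 (A K : Type*) [CommRing A] [IsDomain A] [IsDedekindDomain A]
    (hA : ¬IsField A) [Field K] :
    TopologicalSpace.NoetherianSpace (TotMult A K) ↔
      {p : Ideal A | p.IsMaximal}.Finite := by
  constructor
  · -- Noetherian ⇒ finitely many maximal ideals
    intro hN
    by_contra hfin
    have hinf : {p : Ideal A | p.IsMaximal}.Infinite := hfin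
    classical
    set e := hinf.natEmbedding _ with he
    set p : ℕ → Ideal A := fun n => (e n : Ideal A) with hp
    have hpmax : ∀ n, (p n).IsMaximal := fun n => (e n).2
    have hpinj : Function.Injective p := fun m n h => by
      have : e m = e n := Subtype.ext h
      exact e.injective this
    -- choose a n ∈ p n with a n ≠ 0 and a n ∉ p i for i < n
    have H : ∀ n : ℕ, ∃ x : A, x ∈ p n ∧ x ≠ 0 ∧ ∀ i < n, x ∉ p i := by
      intro n
      set g : ℕ → Ideal A := fun i => if i = n then ⊥ else p i with hg
      have hprime : ∀ i ∈ Finset.range (n + 1), i ≠ n → i ≠ n → (g i).IsPrime := by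
        intro i _ hi _
        simp only [hg, if_neg hi]
        exact (hpmax i).isPrime
      have hnsub : ¬ ((p n : Set A) ⊆ ⋃ i ∈ (↑(Finset.range (n + 1)) : Set ℕ), g i) := by
        intro hsub
        obtain ⟨i, hi, hle⟩ := (Ideal.subset_union_prime n n hprime).mp hsub
        by_cases hin : i = n
        · simp only [hg, hin, if_pos rfl, le_bot_iff] at hle
          exact absurd hle (Ideal.bot_lt_of_maximal (p n) hA).ne'
        · simp only [hg, if_neg hin] at hle
          have : p n = p i := ((hpmax n).eq_of_le (hpmax i).ne_top hle)
          exact hin (hpinj this.symm)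
      rw [Set.not_subset] at hnsub
      obtain ⟨x, hx, hnx⟩ := hnsub
      refine ⟨x, hx, ?_, ?_⟩
      · intro hx0
        apply hnx
        refine Set.mem_biUnion (show n ∈ (↑(Finset.range (n + 1)) : Set ℕ) by simp) ?_
        simp [hg, hx0]
      · intro i hi hxi
        apply hnx
        refine Set.mem_biUnion (show i ∈ (↑(Finset.range (n + 1)) : Set ℕ) by simp; omega) ?_
        simp only [hg, if_neg hi.ne]
        exact hxi
    choose a ha1 ha2 ha3 using H
    -- the arithmetic functions vanishing exactly at p 0, ..., p (n-1)
    have hTprime : ∀ n : ℕ, ∀ q ∈ (p '' {i | i < n}), q.IsPrime := by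
      rintro n q ⟨i, -, rfl⟩
      exact (hpmax i).isPrime
    set f : ℕ → TotMult A K := fun n => indMult (p '' {i | i < n}) K (hTprime n) with hf
    have hfmem : ∀ n, f n ∈ Dset A K (a n) := by
      intro n
      show (f n).toFun (Ideal.span {a n}) ≠ 0
      simp only [hf, indMult]
      rw [if_pos]
      · exact one_ne_zero
      constructor
      · simpa [Ideal.span_singleton_eq_bot] using ha2 n
      · rintro q ⟨i, hi, rfl⟩ hle
        exact ha3 n i hi ((Ideal.span_singleton_le_iff_mem _).mp hle)
    have hfnmem : ∀ n i, i < n → f n ∉ Dset A K (a i) := by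
      intro n i hi hmem
      apply hmem
      show (f n).toFun (Ideal.span {a i}) = 0
      simp only [hf, indMult]
      rw [if_neg]
      rintro ⟨-, h⟩
      exact h (p i) ⟨i, hi, rfl⟩ ((Ideal.span_singleton_le_iff_mem _).mpr (ha1 i))
    -- compactness contradiction
    have hcomp : IsCompact (⋃ n, Dset A K (a n)) := TopologicalSpace.NoetherianSpace.isCompact _
    obtain ⟨t, ht⟩ := hcomp.elim_finite_subcover (fun n => Dset A K (a n))
      (fun n => Dset_isOpen K (a n) (ha2 n)) le_rfl
    set N := t.sup id + 1 with hN'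
    have hfN : f N ∈ ⋃ i ∈ t, Dset A K (a i) :=
      ht (Set.mem_iUnion.mpr ⟨N, hfmem N⟩)
    rw [Set.mem_iUnion₂] at hfN
    obtain ⟨i, hit, hfi⟩ := hfN
    have : i < N := by
      have := Finset.le_sup (f := id) hit
      simp only [id] at this
      omega
    exact hfnmem N i this hfi
  · -- finitely many maximal ideals ⇒ Noetherian
    intro hfin
    set G : Set (Set (TotMult A K)) := {U | ∃ a : A, a ≠ 0 ∧ U = Dset A K a} with hG
    have hGfin : G.Finite := by
      have hsub : G ⊆ (fun S : Set (Ideal A) =>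
          {f : TotMult A K | ∀ p ∈ S, f.toFun p ≠ 0}) '' {S | S ⊆ {p : Ideal A | p.IsMaximal}} := by
        rintro U ⟨a, ha, rfl⟩
        refine ⟨{p : Ideal A | p.IsMaximal ∧ a ∈ p}, fun p hp => hp.1, ?_⟩
        rw [Dset_eq K a ha]
        ext f
        constructor
        · intro h q h1 h2; exact h q ⟨h1, h2⟩
        · rintro h q ⟨h1, h2⟩; exact h q h1 h2
      exact (hfin.finite_subsets.image _).subset hsub
    have hbasis : TopologicalSpace.IsTopologicalBasis
        ((fun s : Set (Set (TotMult A K)) => ⋂₀ s) '' {s | s.Finite ∧ s ⊆ G}) :=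
      TopologicalSpace.isTopologicalBasis_of_subbasis rfl
    have hBfin : ((fun s : Set (Set (TotMult A K)) => ⋂₀ s) '' {s | s.Finite ∧ s ⊆ G}).Finite := by
      refine (hGfin.finite_subsets.image (fun s : Set (Set (TotMult A K)) => ⋂₀ s)).subset ?_
      rintro U ⟨s, ⟨-, hs⟩, rfl⟩
      exact ⟨s, hs, rfl⟩
    have hOfin : {U : Set (TotMult A K) | IsOpen U}.Finite := by
      refine (hBfin.finite_subsets.image (fun s : Set (Set (TotMult A K)) => ⋃₀ s)).subset ?_
      intro U hU
      obtain ⟨S, hSB, rfl⟩ := hbasis.open_eq_sUnion hU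
      exact ⟨S, hSB, rfl⟩
    have : Finite {U : Set (TotMult A K) // IsOpen U} := hOfin.to_subtype
    have : Finite (TopologicalSpace.Opens (TotMult A K)) := by
      refine Finite.of_injective
        (fun o : TopologicalSpace.Opens (TotMult A K) =>
          (⟨(o : Set (TotMult A K)), o.isOpen⟩ : {U : Set (TotMult A K) // IsOpen U})) ?_
      intro x y h
      exact TopologicalSpace.Opens.ext (congrArg Subtype.val h)
    exact Finite.to_wellFoundedGT
end

section
/- The quotient space 𝓜₁(A) is a T0 topological space if and only if the ideal class group Cl(A) of A is a torsion group. -/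
open Ideal

/-- The equivalence relation on 𝓜(A): f ∼ g iff 𝒵(f) = 𝒵(g). -/
def msetoid (A K : Type*) [CommRing A] [Field K] : Setoid (TotMult A K) where
  r f g := Zset A K f = Zset A K g
  iseqv := ⟨fun _ => rfl, Eq.symm, Eq.trans⟩

/-- 𝓜₁(A) = 𝓜(A)/∼, with the quotient topology. -/
def M1 (A K : Type*) [CommRing A] [Field K] : Type _ := Quotient (msetoid A K)

instance (A K : Type*) [CommRing A] [Field K] : TopologicalSpace (M1 A K) :=
  inferInstanceAs (TopologicalSpace (Quotient (msetoid A K)))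
section Aux

variable {A K : Type*} [CommRing A] [IsDomain A] [IsDedekindDomain A] [Field K]

lemma assoc_eq {I J : Ideal A} (h : Associated I J) : I = J :=
  le_antisymm (Ideal.le_of_dvd h.symm.dvd) (Ideal.le_of_dvd h.dvd)

lemma multiset_prod_eq_pow {s : Multiset (Ideal A)} {p : Ideal A} (h : ∀ x ∈ s, x = p) :
    s.prod = p ^ Multiset.card s := by
  induction s using Multiset.induction with
  | empty => simp
  | cons a s ih =>
    rw [Multiset.prod_cons, h a (Multiset.mem_cons_self a s),
      ih (fun x hx => h x (Multiset.mem_cons_of_mem hx)), Multiset.card_cons, pow_succ,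
      mul_comm]

lemma tm_prod_ne_bot {s : Multiset (Ideal A)} (h : ∀ I ∈ s, I ≠ ⊥) : s.prod ≠ ⊥ := by
  intro h0
  rw [← Submodule.zero_eq_bot, Multiset.prod_eq_zero_iff] at h0
  exact h 0 h0 Submodule.zero_eq_bot

lemma tm_map_multiset_prod (f : TotMult A K) (s : Multiset (Ideal A)) (h : ∀ I ∈ s, I ≠ ⊥) :
    f.toFun s.prod = (s.map f.toFun).prod := by
  induction s using Multiset.induction with
  | empty => simpa using f.map_top
  | cons a s ih =>
    have ha : a ≠ ⊥ := h a (Multiset.mem_cons_self a s)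
    have hs : ∀ I ∈ s, I ≠ ⊥ := fun I hI => h I (Multiset.mem_cons_of_mem hI)
    rw [Multiset.prod_cons, f.map_mul a s.prod ha (tm_prod_ne_bot hs), Multiset.map_cons,
      Multiset.prod_cons, ih hs]

/-- Membership in `Dset` only depends on zeros on maximal ideals. -/
lemma tm_mem_dset_iff (f : TotMult A K) {a : A} (ha : a ≠ 0) :
    f ∈ Dset A K a ↔ ∀ p : Ideal A, p.IsMaximal → f.toFun p = 0 → a ∉ p := by
  constructor
  · intro hf p hpm hfp hap
    have hp : p ≠ ⊥ := by
      intro h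
      rw [h, Ideal.mem_bot] at hap
      exact ha hap
    obtain ⟨J, hJ⟩ := Ideal.dvd_iff_le.mpr ((Ideal.span_singleton_le_iff_mem p).mpr hap)
    have hJ0 : J ≠ ⊥ := by
      intro h
      rw [h, mul_bot] at hJ
      exact ha (Ideal.span_singleton_eq_bot.mp hJ)
    exact hf (by rw [hJ, f.map_mul p J hp hJ0, hfp, zero_mul])
  · intro h hfa
    have hb : Ideal.span {a} ≠ ⊥ := by simpa [Ideal.span_singleton_eq_bot] using ha
    obtain ⟨s, hsp, hassoc⟩ := UniqueFactorizationMonoid.exists_prime_factors (Ideal.span {a})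
      (by rw [Submodule.zero_eq_bot]; exact hb)
    have hprod : s.prod = Ideal.span {a} := assoc_eq hassoc
    have hbot : ∀ I ∈ s, I ≠ ⊥ := fun I hI => by
      rw [← Submodule.zero_eq_bot]; exact (hsp I hI).ne_zero
    rw [← hprod, tm_map_multiset_prod f s hbot] at hfa
    have h0 : (0 : K) ∈ s.map f.toFun := Multiset.prod_eq_zero_iff.mp hfa
    obtain ⟨q, hq, hfq⟩ := Multiset.mem_map.mp h0
    have hqm : q.IsMaximal :=
      (Ideal.isPrime_of_prime (hsp q hq)).isMaximal (hbot q hq)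
    have haq : a ∈ q := (Ideal.span_singleton_le_iff_mem q).mp
      (hprod ▸ Ideal.le_of_dvd (Multiset.dvd_prod hq))
    exact h q hqm hfq haq

lemma tm_dset_congr {f g : TotMult A K} (hz : Zset A K f = Zset A K g) {a : A} (ha : a ≠ 0) :
    f ∈ Dset A K a ↔ g ∈ Dset A K a := by
  rw [tm_mem_dset_iff f ha, tm_mem_dset_iff g ha]
  constructor
  · intro h p hpm hgp
    have hp : p ∈ Zset A K f := hz ▸ (⟨hpm, hgp⟩ : p ∈ Zset A K g)
    exact h p hp.1 hp.2
  · intro h p hpm hfp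
    have hp : p ∈ Zset A K g := hz ▸ (⟨hpm, hfp⟩ : p ∈ Zset A K f)
    exact h p hp.1 hp.2

lemma gen_insep {X : Type*} {S : Set (Set X)} {x y : X}
    (h : ∀ s ∈ S, x ∈ s ↔ y ∈ s) {U : Set X} (hU : TopologicalSpace.GenerateOpen S U) :
    x ∈ U ↔ y ∈ U := by
  induction hU with
  | basic s hs => exact h s hs
  | univ => simp
  | inter u v _ _ ihu ihv => simp [Set.mem_inter_iff, ihu, ihv]
  | sUnion S' _ ih =>
    constructor <;> rintro ⟨t, ht, hxt⟩
    · exact ⟨t, ht, (ih t ht).mp hxt⟩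
    · exact ⟨t, ht, (ih t ht).mpr hxt⟩

lemma tm_insep_iff (f g : TotMult A K) :
    Inseparable (Quotient.mk (msetoid A K) f : M1 A K) (Quotient.mk (msetoid A K) g) ↔
      ∀ a : A, a ≠ 0 → (f ∈ Dset A K a ↔ g ∈ Dset A K a) := by
  letI := msetoid A K
  constructor
  · intro hin a ha
    set U : Set (M1 A K) := Quotient.mk (msetoid A K) '' Dset A K a with hUdef
    have hpre : Quotient.mk' ⁻¹' U = Dset A K a := by
      ext h'
      constructor
      · rintro ⟨h, hh, hhe⟩
        have hr : Zset A K h = Zset A K h' := Quotient.exact hhe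
        exact (tm_dset_congr hr ha).mp hh
      · intro hh
        exact ⟨h', hh, rfl⟩
    have hUopen : IsOpen U := by
      refine (isOpen_coinduced (f := (Quotient.mk' : TotMult A K → M1 A K))).mpr ?_
      rw [hpre]
      exact TopologicalSpace.GenerateOpen.basic _ ⟨a, ha, rfl⟩
    have := (inseparable_iff_forall_isOpen.mp hin) U hUopen
    constructor
    · intro hf
      have hmem : Quotient.mk (msetoid A K) g ∈ U := this.mp ⟨f, hf, rfl⟩
      have h2 : g ∈ Quotient.mk' ⁻¹' U := hmem
      rwa [hpre] at h2
    · intro hg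
      have hmem : Quotient.mk (msetoid A K) f ∈ U := this.mpr ⟨g, hg, rfl⟩
      have h2 : f ∈ Quotient.mk' ⁻¹' U := hmem
      rwa [hpre] at h2
  · intro h
    rw [inseparable_iff_forall_isOpen]
    intro U hU
    have hgen : TopologicalSpace.GenerateOpen {V | ∃ a : A, a ≠ 0 ∧ V = Dset A K a}
        ((Quotient.mk' : TotMult A K → M1 A K) ⁻¹' U) :=
      isOpen_coinduced.mp hU
    have := gen_insep (x := f) (y := g) ?_ hgen
    · exact this
    · rintro s ⟨a, ha, rfl⟩
      exact h a ha

end Aux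
section Main

variable {A K : Type*} [CommRing A] [IsDomain A] [IsDedekindDomain A] [Field K]

open Classical in
noncomputable def powInd (K : Type*) [Field K] (p : Ideal A) (hp : p ≠ ⊥) (hpm : p.IsMaximal) :
    TotMult A K where
  toFun I := if ∃ n : ℕ, I = p ^ n then 1 else 0
  map_top := if_pos ⟨0, ((pow_zero p).trans Ideal.one_eq_top).symm⟩
  map_mul I J hI hJ := by
    beta_reduce
    have hprime : Prime p := Ideal.prime_of_isPrime hp hpm.isPrime
    have claim : ∀ I' J' : Ideal A, (¬∃ n : ℕ, I' = p ^ n) → ¬∃ n : ℕ, I' * J' = p ^ n := by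
      rintro I' J' hI' ⟨n, hn⟩
      obtain ⟨i, _, hassoc⟩ := (dvd_prime_pow hprime n).mp ⟨J', hn.symm⟩
      exact hI' ⟨i, assoc_eq hassoc⟩
    by_cases h1 : ∃ n : ℕ, I = p ^ n
    · by_cases h2 : ∃ n : ℕ, J = p ^ n
      · obtain ⟨m, rfl⟩ := h1
        obtain ⟨n, rfl⟩ := h2
        rw [if_pos ⟨m + n, (pow_add p m n).symm⟩, if_pos ⟨m, rfl⟩, if_pos ⟨n, rfl⟩, one_mul]
      · rw [if_neg h2, mul_zero, if_neg]
        rw [mul_comm]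
        exact claim J I h2
    · rw [if_neg h1, zero_mul, if_neg (claim I J h1)]
  map_bot := by
    beta_reduce
    rw [if_neg]
    rintro ⟨n, hn⟩
    have hp0 : p ≠ 0 := by rwa [Submodule.zero_eq_bot]
    exact pow_ne_zero n hp0 (by rw [← hn]; exact Submodule.zero_eq_bot.symm)

open Classical in
noncomputable def topInd (A K : Type*) [CommRing A] [IsDomain A] [Field K] : TotMult A K where
  toFun I := if I = ⊤ then 1 else 0
  map_top := if_pos rfl
  map_mul I J _ _ := by
    beta_reduce
    by_cases h1 : I = ⊤
    · by_cases h2 : J = ⊤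
      · rw [if_pos h1, if_pos h2, if_pos (by rw [h1, h2, top_mul]), one_mul]
      · rw [if_neg h2, mul_zero, if_neg]
        intro h
        exact h2 (top_le_iff.mp (h ▸ Ideal.mul_le_right))
    · rw [if_neg h1, zero_mul, if_neg]
      intro h
      exact h1 (top_le_iff.mp (h ▸ Ideal.mul_le_left))
  map_bot := by
    beta_reduce
    rw [if_neg]
    intro h
    have h1 : (1 : A) ∈ (⊥ : Ideal A) := (Ideal.eq_top_iff_one ⊥).mp h
    rw [Ideal.mem_bot] at h1
    exact one_ne_zero h1

lemma maximal_eq_of_pow {p q : Ideal A} (hpm : p.IsMaximal) (hqm : q.IsMaximal)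
    {n : ℕ} (hq : q = p ^ n) : q = p := by
  have hn : n ≠ 0 := by
    rintro rfl
    rw [pow_zero, Ideal.one_eq_top] at hq
    exact hqm.ne_top hq
  refine hqm.eq_of_le hpm.ne_top ?_
  rw [hq]
  exact Ideal.pow_le_self hn

lemma prime_pow_principal (K : Type*) [Field K] (hT : T0Space (M1 A K)) {p : Ideal A}
    (hpm : p.IsMaximal) (hp : p ≠ ⊥) : ∃ n : ℕ, 0 < n ∧ (p ^ n).IsPrincipal := by
  classical
  set f : TotMult A K := powInd K p hp hpm with hfdef
  set g : TotMult A K := topInd A K with hgdef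
  have hfp : f.toFun p = 1 := if_pos ⟨1, (pow_one p).symm⟩
  have hfq : ∀ q : Ideal A, q.IsMaximal → q ≠ p → f.toFun q = 0 := by
    intro q hqm hqp
    apply if_neg
    rintro ⟨n, hn⟩
    exact hqp (maximal_eq_of_pow hpm hqm hn)
  have hgq : ∀ q : Ideal A, q.IsMaximal → g.toFun q = 0 := fun q hqm => if_neg hqm.ne_top
  -- the classes of f and g are distinct
  have hzne : Zset A K f ≠ Zset A K g := by
    intro h
    have hpz : p ∈ Zset A K g := ⟨hpm, hgq p hpm⟩
    rw [← h] at hpz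
    rw [hpz.2] at hfp
    exact zero_ne_one hfp
  have hne : (Quotient.mk (msetoid A K) f : M1 A K) ≠ Quotient.mk (msetoid A K) g := by
    intro h
    letI := msetoid A K
    exact hzne (Quotient.exact h)
  have hnin : ¬Inseparable (Quotient.mk (msetoid A K) f : M1 A K)
      (Quotient.mk (msetoid A K) g) := by
    haveI : T0Space (Quotient (msetoid A K)) := hT
    exact fun h => hne h.eq
  rw [tm_insep_iff] at hnin
  push_neg at hnin
  obtain ⟨a, ha, hiff⟩ := hnin
  -- g ∈ Dset a → f ∈ Dset a
  have himp : g ∈ Dset A K a → f ∈ Dset A K a := by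
    rw [tm_mem_dset_iff f ha, tm_mem_dset_iff g ha]
    intro h q hqm _
    exact h q hqm (hgq q hqm)
  have hf : f ∈ Dset A K a := by tauto
  have hg : g ∉ Dset A K a := by tauto
  rw [tm_mem_dset_iff g ha] at hg
  push_neg at hg
  obtain ⟨q, hqm, _, haq⟩ := hg
  rw [tm_mem_dset_iff f ha] at hf
  -- every maximal ideal containing a equals p
  have hmax : ∀ q' : Ideal A, q'.IsMaximal → a ∈ q' → q' = p := by
    intro q' hq'm haq'
    by_contra hne'
    exact hf q' hq'm (hfq q' hq'm hne') haq'
  have hap : a ∈ p := (hmax q hqm haq) ▸ haq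
  -- factor span {a}
  have hb : Ideal.span {a} ≠ ⊥ := by simpa [Ideal.span_singleton_eq_bot] using ha
  obtain ⟨s, hsp, hassoc⟩ := UniqueFactorizationMonoid.exists_prime_factors (Ideal.span {a})
    (by rw [Submodule.zero_eq_bot]; exact hb)
  have hprod : s.prod = Ideal.span {a} := assoc_eq hassoc
  have hall : ∀ t ∈ s, t = p := by
    intro t ht
    have htb : t ≠ ⊥ := by rw [← Submodule.zero_eq_bot]; exact (hsp t ht).ne_zero
    have htm : t.IsMaximal := (Ideal.isPrime_of_prime (hsp t ht)).isMaximal htb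
    have hat : a ∈ t := (Ideal.span_singleton_le_iff_mem t).mp
      (hprod ▸ Ideal.le_of_dvd (Multiset.dvd_prod ht))
    exact hmax t htm hat
  have hpow : Ideal.span {a} = p ^ Multiset.card s := by
    rw [← hprod, multiset_prod_eq_pow hall]
  have hcard : 0 < Multiset.card s := by
    rcases Nat.eq_zero_or_pos (Multiset.card s) with h0 | h0
    · exfalso
      rw [h0, pow_zero, Ideal.one_eq_top] at hpow
      exact hpm.ne_top (top_le_iff.mp
        (hpow ▸ (Ideal.span_singleton_le_iff_mem p).mpr hap))
    · exact h0
  exact ⟨Multiset.card s, hcard, ⟨⟨a, hpow.symm ▸ rfl⟩⟩⟩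

lemma bot_ne_of_maximal (hA : ¬IsField A) {p : Ideal A} (hpm : p.IsMaximal) : p ≠ ⊥ := by
  rintro rfl
  apply hA
  refine ⟨exists_pair_ne A, mul_comm, ?_⟩
  intro a ha
  have hb : Ideal.span {a} ≠ ⊥ := by simpa [Ideal.span_singleton_eq_bot] using ha
  have : Ideal.span {a} = ⊤ := hpm.out.2 _ (bot_lt_iff_ne_bot.mpr hb)
  exact isUnit_iff_exists_inv.mp (Ideal.span_singleton_eq_top.mp this)

end Main

/-!
STATEMENT 18: The quotient space 𝓜₁(A) is T0 if and only if the ideal class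
group Cl(A) is a torsion group.
-/
theorem statement18 (A K : Type*) [CommRing A] [IsDomain A] [IsDedekindDomain A]
    (hA : ¬IsField A) [Field K] :
    T0Space (M1 A K) ↔ Monoid.IsTorsion (ClassGroup A) := by
  constructor
  · intro hT c
    obtain ⟨⟨I, hI⟩, rfl⟩ := ClassGroup.mk0_surjective c
    suffices h : ∀ J : Ideal A, ∀ hJ : J ∈ nonZeroDivisors (Ideal A),
        ClassGroup.mk0 ⟨J, hJ⟩ ∈ CommGroup.torsion (ClassGroup A) by
      exact (CommGroup.mem_torsion _).mp (h I hI)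
    intro J
    induction J using UniqueFactorizationMonoid.induction_on_prime with
    | h₁ =>
      intro hJ
      exact absurd (mem_nonZeroDivisors_iff_ne_zero.mp hJ) (by simp)
    | h₂ x hx =>
      intro hJ
      have hxt : x = ⊤ := Ideal.isUnit_iff.mp hx
      have : (⟨x, hJ⟩ : nonZeroDivisors (Ideal A)) = 1 :=
        Subtype.ext (hxt.trans Ideal.one_eq_top.symm)
      rw [this, MonoidHom.map_one]
      exact Subgroup.one_mem _
    | h₃ J q hJ0 hq ih =>
      intro hmem
      have hq0 : q ∈ nonZeroDivisors (Ideal A) :=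
        mem_nonZeroDivisors_iff_ne_zero.mpr hq.ne_zero
      have hJ0' : J ∈ nonZeroDivisors (Ideal A) :=
        mem_nonZeroDivisors_iff_ne_zero.mpr hJ0
      have hsplit : (⟨q * J, hmem⟩ : nonZeroDivisors (Ideal A)) =
          ⟨q, hq0⟩ * ⟨J, hJ0'⟩ := rfl
      rw [hsplit, MonoidHom.map_mul]
      refine mul_mem ?_ (ih hJ0')
      -- q is a nonzero prime, hence maximal
      have hqb : q ≠ ⊥ := by rw [← Submodule.zero_eq_bot]; exact hq.ne_zero
      have hqm : q.IsMaximal := (Ideal.isPrime_of_prime hq).isMaximal hqb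
      obtain ⟨n, hn, hprin⟩ := prime_pow_principal K hT hqm hqb
      rw [CommGroup.mem_torsion, isOfFinOrder_iff_pow_eq_one]
      refine ⟨n, hn, ?_⟩
      have hpowmem : q ^ n ∈ nonZeroDivisors (Ideal A) :=
        mem_nonZeroDivisors_iff_ne_zero.mpr
          (by rw [← Submodule.zero_eq_bot] at hqb; exact pow_ne_zero n hqb)
      have hpow : (⟨q, hq0⟩ : nonZeroDivisors (Ideal A)) ^ n = ⟨q ^ n, hpowmem⟩ :=
        Subtype.ext (by push_cast; rfl)
      rw [← MonoidHom.map_pow, hpow]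
      exact (ClassGroup.mk0_eq_one_iff hpowmem).mpr hprin
  · intro hto
    rw [t0Space_iff_inseparable]
    intro x y
    refine Quotient.inductionOn₂ x y ?_
    intro f g hin
    have claim : ∀ f g : TotMult A K,
        Inseparable (Quotient.mk (msetoid A K) f : M1 A K) (Quotient.mk (msetoid A K) g) →
        ∀ p : Ideal A, p ∈ Zset A K f → p ∈ Zset A K g := by
      intro f g hin p hp
      obtain ⟨hpm, hfp⟩ := hp
      have hpb : p ≠ ⊥ := bot_ne_of_maximal hA hpm
      have hpmem : p ∈ nonZeroDivisors (Ideal A) :=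
        mem_nonZeroDivisors_iff_ne_zero.mpr (by rwa [Submodule.zero_eq_bot])
      obtain ⟨n, hn, hone⟩ := isOfFinOrder_iff_pow_eq_one.mp (hto (ClassGroup.mk0 ⟨p, hpmem⟩))
      have hpownz : p ^ n ≠ ⊥ := pow_ne_zero n (by rwa [Submodule.zero_eq_bot])
      have hpowmem : p ^ n ∈ nonZeroDivisors (Ideal A) :=
        mem_nonZeroDivisors_iff_ne_zero.mpr (by rwa [Submodule.zero_eq_bot])
      have hpow : (⟨p, hpmem⟩ : nonZeroDivisors (Ideal A)) ^ n = ⟨p ^ n, hpowmem⟩ :=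
        Subtype.ext (by push_cast; rfl)
      rw [← MonoidHom.map_pow, hpow] at hone
      have hprin : (p ^ n).IsPrincipal := (ClassGroup.mk0_eq_one_iff hpowmem).mp hone
      obtain ⟨a, hspan⟩ := hprin
      have ha : a ≠ 0 := by
        intro h0
        rw [h0] at hspan
        rw [hspan] at hpownz
        exact hpownz (by simp)
      have hain : a ∈ p := by
        have : a ∈ p ^ n := hspan ▸ Ideal.mem_span_singleton_self a
        exact Ideal.pow_le_self hn.ne' this
      have hfnot : f ∉ Dset A K a := by
        rw [tm_mem_dset_iff f ha]
        push_neg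
        exact ⟨p, hpm, hfp, hain⟩
      have hgnot : g ∉ Dset A K a := by
        intro hg
        exact hfnot (((tm_insep_iff f g).mp hin a ha).mpr hg)
      rw [tm_mem_dset_iff g ha] at hgnot
      push_neg at hgnot
      obtain ⟨q, hqm, hgq, haq⟩ := hgnot
      have hle : p ^ n ≤ q := by
        rw [hspan]
        exact (Ideal.span_singleton_le_iff_mem q).mpr haq
      have hpq : p ≤ q := (Ideal.IsPrime.pow_le_iff hn.ne').mp hle
      have : p = q := hpm.eq_of_le hqm.ne_top hpq
      rw [this]
      exact ⟨hqm, hgq⟩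
    letI := msetoid A K
    refine Quotient.sound ?_
    have h1 := claim f g hin
    have h2 := claim g f hin.symm
    exact Set.Subset.antisymm (fun p hp => h1 p hp) (fun p hp => h2 p hp)
end

section
/- The Krull dimension of the topological space 𝓜₁(A) — the supremum of the lengths n of chains Z₀ ⊊ Z₁ ⊊ ⋯ ⊊ Z_n of irreducible closed subsets — equals the cardinality of Max(A) (infinite if Max(A) is infinite). Moreover, if A has exactly n < ∞ maximal ideals, then 𝓜₁(A) has exactly 2^n points. -/
open Ideal

/-!
STATEMENT 19: The Krull dimension of the topological space 𝓜₁(A) equals the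
cardinality of Max(A) (it is n if A has exactly n maximal ideals, and infinite
(= ⊤) if Max(A) is infinite).  Moreover, if A has exactly n < ∞ maximal ideals,
then 𝓜₁(A) has exactly 2^n points.
-/

namespace Stmt19Aux

variable {A K : Type*} [CommRing A] [IsDomain A] [IsDedekindDomain A] [Field K]

attribute [local instance] Classical.propDecidable

/-- The totally multiplicative function attached to a set `Z` of maximal ideals:
`f(𝔭) = 0` for `𝔭 ∈ Z` and `f(𝔭) = 1` otherwise. -/
noncomputable def fOf (K : Type*) [Field K] (Z : Set (Ideal A)) (hZ : ∀ p ∈ Z, p.IsMaximal) :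
    TotMult A K where
  toFun I := if I = ⊥ then 0 else if ∃ p ∈ Z, I ≤ p then 0 else 1
  map_top := by
    rw [if_neg, if_neg]
    · rintro ⟨p, hp, hle⟩
      exact (hZ p hp).ne_top (top_le_iff.mp hle)
    · exact top_ne_bot
  map_mul I J hI hJ := by
    have hIJ : I * J ≠ ⊥ := by
      rw [Ne, Ideal.mul_eq_bot]
      tauto
    rw [if_neg hIJ, if_neg hI, if_neg hJ]
    have hiff : (∃ p ∈ Z, I * J ≤ p) ↔ (∃ p ∈ Z, I ≤ p) ∨ ∃ p ∈ Z, J ≤ p := by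
      constructor
      · rintro ⟨p, hp, hle⟩
        rcases ((hZ p hp).isPrime.mul_le).mp hle with h | h
        · exact Or.inl ⟨p, hp, h⟩
        · exact Or.inr ⟨p, hp, h⟩
      · rintro (⟨p, hp, hle⟩ | ⟨p, hp, hle⟩)
        · exact ⟨p, hp, le_trans Ideal.mul_le_left hle⟩
        · exact ⟨p, hp, le_trans Ideal.mul_le_right hle⟩
    by_cases h1 : ∃ p ∈ Z, I ≤ p
    · rw [if_pos (hiff.mpr (Or.inl h1)), if_pos h1, zero_mul]
    · by_cases h2 : ∃ p ∈ Z, J ≤ p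
      · rw [if_pos (hiff.mpr (Or.inr h2)), if_neg h1, if_pos h2, mul_zero]
      · have hno : ¬∃ p ∈ Z, I * J ≤ p := fun hc => (hiff.mp hc).elim h1 h2
        rw [if_neg hno, if_neg h1, if_neg h2, one_mul]
  map_bot := if_pos rfl

lemma Zset_fOf (hA : ¬IsField A) (Z : Set (Ideal A)) (hZ : ∀ p ∈ Z, p.IsMaximal) :
    Zset A K (fOf K Z hZ) = Z := by
  ext p
  constructor
  · rintro ⟨hpmax, h0⟩
    by_contra hp
    have hpbot : p ≠ ⊥ := Ring.ne_bot_of_isMaximal_of_not_isField hpmax hA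
    dsimp only [fOf] at h0
    rw [if_neg hpbot] at h0
    by_cases hex : ∃ q ∈ Z, p ≤ q
    · obtain ⟨q, hq, hle⟩ := hex
      exact hp (hpmax.eq_of_le (hZ q hq).ne_top hle ▸ hq)
    · rw [if_neg hex] at h0
      exact one_ne_zero h0
  · intro hp
    refine ⟨hZ p hp, ?_⟩
    have hpbot : p ≠ ⊥ := Ring.ne_bot_of_isMaximal_of_not_isField (hZ p hp) hA
    show (if p = ⊥ then (0:K) else if ∃ q ∈ Z, p ≤ q then 0 else 1) = 0
    rw [if_neg hpbot, if_pos ⟨p, hp, le_rfl⟩]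

/-- If `f(I) = 0` for a nonzero ideal `I`, some maximal ideal above `I` is a zero of `f`. -/
lemma exists_maximal_zero (f : TotMult A K) :
    ∀ I : Ideal A, I ≠ ⊥ → f.toFun I = 0 → ∃ p, p ∈ Zset A K f ∧ I ≤ p := by
  intro I
  induction I using UniqueFactorizationMonoid.induction_on_prime with
  | h₁ => intro h; exact absurd rfl h
  | h₂ u hu =>
    intro _ h0
    rw [Ideal.isUnit_iff.mp hu, f.map_top] at h0
    exact absurd h0 one_ne_zero
  | h₃ J p hJ hp ih =>
    intro hne h0
    have hpbot : p ≠ ⊥ := hp.ne_zero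
    have hJbot : J ≠ ⊥ := hJ
    have hpmax : p.IsMaximal := (Ideal.isPrime_of_prime hp).isMaximal hpbot
    rw [f.map_mul p J hpbot hJbot] at h0
    rcases mul_eq_zero.mp h0 with h | h
    · exact ⟨p, ⟨hpmax, h⟩, Ideal.mul_le_left⟩
    · obtain ⟨q, hq, hle⟩ := ih hJbot h
      exact ⟨q, hq, le_trans Ideal.mul_le_right hle⟩

/-- Conversely, if `I ≤ p` with `p` a zero of `f`, then `f(I) = 0`. -/
lemma zero_of_le (hA : ¬IsField A) (f : TotMult A K) {p I : Ideal A}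
    (hp : p ∈ Zset A K f) (hI : I ≠ ⊥) (hle : I ≤ p) : f.toFun I = 0 := by
  have hpbot : p ≠ ⊥ := Ring.ne_bot_of_isMaximal_of_not_isField hp.1 hA
  obtain ⟨c, rfl⟩ : p ∣ I := Ideal.dvd_iff_le.mpr hle
  have hc : c ≠ ⊥ := by
    rintro rfl
    exact hI (mul_bot p)
  rw [f.map_mul p c hpbot hc, hp.2, zero_mul]

lemma span_zero_iff (hA : ¬IsField A) (f : TotMult A K) {a : A} (ha : a ≠ 0) :
    f.toFun (Ideal.span {a}) = 0 ↔ ∃ p ∈ Zset A K f, a ∈ p := by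
  have hbot : Ideal.span {a} ≠ ⊥ := by
    rw [Ne, Ideal.span_singleton_eq_bot]; exact ha
  constructor
  · intro h0
    obtain ⟨p, hp, hle⟩ := exists_maximal_zero f _ hbot h0
    exact ⟨p, hp, hle (Ideal.subset_span rfl)⟩
  · rintro ⟨p, hp, hmem⟩
    exact zero_of_le hA f hp hbot ((Ideal.span_singleton_le_iff_mem p).mpr hmem)

lemma mem_Dset_iff (hA : ¬IsField A) (f : TotMult A K) {a : A} (ha : a ≠ 0) :
    f ∈ Dset A K a ↔ ∀ p ∈ Zset A K f, a ∉ p := by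
  unfold Dset
  rw [Set.mem_setOf_eq, Ne, span_zero_iff hA f ha]
  push_neg
  rfl

/-- The zero set as a function on `M1`. -/
def ZQ : M1 A K → Set (Ideal A) := Quotient.lift (Zset A K) (fun _ _ h => h)

def mkM (f : TotMult A K) : M1 A K := Quotient.mk (msetoid A K) f

@[simp] lemma ZQ_mkM (f : TotMult A K) : ZQ (mkM f) = Zset A K f := rfl

lemma ZQ_max (x : M1 A K) : ∀ p ∈ ZQ x, p.IsMaximal := by
  induction x using Quotient.ind with
  | _ f => exact fun p hp => hp.1

lemma ZQ_injective : Function.Injective (ZQ : M1 A K → Set (Ideal A)) := by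
  intro x y h
  induction x using Quotient.ind with
  | _ f =>
    induction y using Quotient.ind with
    | _ g => exact Quotient.sound h

lemma mkM_eq_iff {f g : TotMult A K} : mkM f = mkM g ↔ Zset A K f = Zset A K g :=
  ⟨fun h => congrArg ZQ h, fun h => Quot.sound h⟩

/-- The basic open subset of `M1` attached to `a ≠ 0`. -/
def UQ (A K : Type*) [CommRing A] [Field K] (a : A) : Set (M1 A K) :=
  {x | ∀ p ∈ ZQ x, a ∉ p}

lemma preimage_UQ (hA : ¬IsField A) {a : A} (ha : a ≠ 0) :
    (Quotient.mk (msetoid A K)) ⁻¹' (UQ A K a) = Dset A K a := by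
  ext f
  show mkM f ∈ UQ A K a ↔ _
  exact (mem_Dset_iff hA f ha).symm

lemma isOpen_Dset {a : A} (ha : a ≠ 0) : IsOpen (Dset A K a) :=
  TopologicalSpace.isOpen_generateFrom_of_mem ⟨a, ha, rfl⟩

lemma continuous_mkM : Continuous (Quotient.mk (msetoid A K) : TotMult A K → M1 A K) :=
  continuous_coinduced_rng

lemma isOpen_UQ (hA : ¬IsField A) {a : A} (ha : a ≠ 0) : IsOpen (UQ A K a) := by
  have h : IsOpen ((Quotient.mk (msetoid A K)) ⁻¹' (UQ A K a)) := by
    rw [preimage_UQ hA ha]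
    exact isOpen_Dset ha
  exact isOpen_coinduced.mpr h

/-- Basis property: every open set of `𝓜(A)` containing `f` contains a `Dset a ∋ f`. -/
lemma exists_Dset_subset {V : Set (TotMult A K)} (hV : IsOpen V) :
    ∀ f ∈ V, ∃ a : A, a ≠ 0 ∧ f ∈ Dset A K a ∧ Dset A K a ⊆ V := by
  have hV' : TopologicalSpace.GenerateOpen {U | ∃ a : A, a ≠ 0 ∧ U = Dset A K a} V := hV
  clear hV
  induction hV' with
  | basic U hU =>
    rintro f hf
    obtain ⟨a, ha, rfl⟩ := hU
    exact ⟨a, ha, hf, subset_rfl⟩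
  | univ =>
    intro f _
    refine ⟨1, one_ne_zero, ?_, fun _ _ => trivial⟩
    show f.toFun (Ideal.span {1}) ≠ 0
    rw [Ideal.span_singleton_one, f.map_top]
    exact one_ne_zero
  | inter U W hU hW ihU ihW =>
    intro f hf
    obtain ⟨a, ha, hfa, haU⟩ := ihU f hf.1
    obtain ⟨b, hb, hfb, hbW⟩ := ihW f hf.2
    have hDab : Dset A K (a * b) = Dset A K a ∩ Dset A K b := by
      ext g
      have hsab : Ideal.span {a * b} = Ideal.span {a} * Ideal.span {b} :=
        (Ideal.span_singleton_mul_span_singleton a b).symm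
      have hna : Ideal.span {a} ≠ ⊥ := by rw [Ne, Ideal.span_singleton_eq_bot]; exact ha
      have hnb : Ideal.span {b} ≠ ⊥ := by rw [Ne, Ideal.span_singleton_eq_bot]; exact hb
      show g.toFun (Ideal.span {a * b}) ≠ 0 ↔ _
      rw [hsab, g.map_mul _ _ hna hnb]
      simp only [Set.mem_inter_iff, mul_ne_zero_iff]
      rfl
    refine ⟨a * b, mul_ne_zero ha hb, ?_, ?_⟩
    · rw [hDab]; exact ⟨hfa, hfb⟩
    · rw [hDab]; exact fun g hg => ⟨haU hg.1, hbW hg.2⟩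
  | sUnion S hS ih =>
    rintro f ⟨U, hU, hf⟩
    obtain ⟨a, ha, hfa, haU⟩ := ih U hU f hf
    exact ⟨a, ha, hfa, haU.trans (Set.subset_sUnion_of_mem hU)⟩

/-- Specialization: containment of zero sets gives closure membership. -/
lemma mem_closure_of_subset (hA : ¬IsField A) (f g : TotMult A K)
    (h : Zset A K g ⊆ Zset A K f) : mkM f ∈ closure {mkM g} := by
  rw [mem_closure_iff]
  intro U hU hfU
  have hpre : IsOpen ((Quotient.mk (msetoid A K)) ⁻¹' U) := hU.preimage continuous_mkM
  obtain ⟨a, ha, hfa, haU⟩ := exists_Dset_subset hpre f hfU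
  have hga : g ∈ Dset A K a := by
    rw [mem_Dset_iff hA g ha]
    intro p hp
    exact (mem_Dset_iff hA f ha).mp hfa p (h hp)
  exact ⟨mkM g, haU hga, rfl⟩

/-- An element of a maximal ideal `p` avoiding a finite set of other maximal ideals. -/
lemma exists_avoiding (hA : ¬IsField A) {p : Ideal A} (hp : p.IsMaximal) (T : Set (Ideal A))
    (hT : T.Finite) (hTmax : ∀ q ∈ T, q.IsMaximal) (hpT : p ∉ T) :
    ∃ a : A, a ∈ p ∧ a ≠ 0 ∧ ∀ q ∈ T, a ∉ q := by
  classical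
  set s : Finset (Ideal A) := insert ⊥ hT.toFinset with hs
  have hprime : ∀ i ∈ s, i ≠ (⊥ : Ideal A) → i ≠ (⊥ : Ideal A) → i.IsPrime := by
    intro i hi hne _
    rcases Finset.mem_insert.mp hi with rfl | hi
    · exact absurd rfl hne
    · exact (hTmax i (hT.mem_toFinset.mp hi)).isPrime
  have hnot : ¬ ((p : Set A) ⊆ ⋃ i ∈ (↑s : Set (Ideal A)), ((fun i => i) i : Set A)) := by
    rw [Ideal.subset_union_prime (⊥ : Ideal A) (⊥ : Ideal A) hprime]
    rintro ⟨i, hi, hle⟩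
    rcases Finset.mem_insert.mp hi with rfl | hi
    · exact (Ring.ne_bot_of_isMaximal_of_not_isField hp hA) (le_bot_iff.mp hle)
    · have hi' : i ∈ T := hT.mem_toFinset.mp hi
      exact hpT ((hp.eq_of_le (hTmax i hi').ne_top hle) ▸ hi')
  obtain ⟨a, hap, ha⟩ := Set.not_subset.mp hnot
  refine ⟨a, hap, ?_, ?_⟩
  · rintro rfl
    exact ha (Set.mem_biUnion (by simp [hs]) (Ideal.zero_mem ⊥))
  · intro q hq haq
    exact ha (Set.mem_biUnion (by simp [hs]; exact Or.inr hq) haq)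

/-- Non-specialization: a zero `p` of `f` missing from the (finite) zero set of `g`
prevents `mkM g` from lying in the closure of `{mkM f}`. -/
lemma not_mem_closure (hA : ¬IsField A) (f g : TotMult A K)
    (hgfin : (Zset A K g).Finite) {p : Ideal A} (hpf : p ∈ Zset A K f)
    (hpg : p ∉ Zset A K g) : mkM g ∉ closure {mkM f} := by
  obtain ⟨a, hap, ha0, havoid⟩ :=
    exists_avoiding hA hpf.1 (Zset A K g) hgfin (fun q hq => hq.1) hpg
  intro hmem
  rw [mem_closure_iff] at hmem
  obtain ⟨y, hyU, hy⟩ := hmem (UQ A K a) (isOpen_UQ hA ha0)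
    (fun q hq => havoid q hq)
  rcases hy with rfl
  exact (hyU p hpf) hap

/-- Specialization order on `M1`: with a finite zero set on the left,
`x ∈ closure {y}` iff `ZQ y ⊆ ZQ x`. -/
lemma spec_iff (hA : ¬IsField A) (x y : M1 A K) (hfinx : (ZQ x).Finite) :
    x ∈ closure {y} ↔ ZQ y ⊆ ZQ x := by
  constructor
  · intro hcl p hp
    by_contra hpx
    obtain ⟨a, hap, ha0, havoid⟩ :=
      exists_avoiding hA (ZQ_max y p hp) (ZQ x) hfinx (ZQ_max x) hpx
    rw [mem_closure_iff] at hcl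
    obtain ⟨w, hwU, hw⟩ := hcl (UQ A K a) (isOpen_UQ hA ha0) (fun q hq => havoid q hq)
    rcases hw with rfl
    exact hwU p hp hap
  · intro hsub
    induction x using Quotient.ind with
    | _ f =>
      induction y using Quotient.ind with
      | _ g => exact mem_closure_of_subset hA f g hsub

/-- The chain of irreducible closed subsets of `M1` coming from an injective family of
`m` maximal ideals. -/
lemma exists_ltSeries (hA : ¬IsField A) (m : ℕ) (g : Fin m → Ideal A)
    (hg : Function.Injective g) (hmax : ∀ i, (g i).IsMaximal) :
    ∃ p : LTSeries (TopologicalSpace.IrreducibleCloseds (M1 A K)), p.length = m := by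
  have hZmax : ∀ i : Fin (m+1), ∀ q ∈ g '' {j | (i : ℕ) ≤ (j : ℕ)}, q.IsMaximal := by
    rintro i q ⟨j, _, rfl⟩
    exact hmax j
  refine ⟨⟨m, fun i =>
    ⟨closure {mkM (fOf K (g '' {j | (i : ℕ) ≤ (j : ℕ)}) (hZmax i))},
      isIrreducible_singleton.closure, isClosed_closure⟩, ?_⟩, rfl⟩
  intro i
  show (_ : TopologicalSpace.IrreducibleCloseds (M1 A K)) < _
  rw [← SetLike.coe_ssubset_coe]
  set Zbig := g '' {j | (i.castSucc : ℕ) ≤ (j : ℕ)} with hZbig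
  set Zsmall := g '' {j | (i.succ : ℕ) ≤ (j : ℕ)} with hZsmall
  have hsub : Zsmall ⊆ Zbig := by
    rintro q ⟨j, hj, rfl⟩
    exact ⟨j, by
      simp only [Set.mem_setOf_eq, Fin.coe_castSucc, Fin.val_succ] at hj ⊢
      omega, rfl⟩
  have hsubcl : closure {mkM (fOf K Zbig (hZmax i.castSucc))} ⊆
      closure {mkM (fOf K Zsmall (hZmax i.succ))} := by
    apply closure_minimal _ isClosed_closure
    rw [Set.singleton_subset_iff]
    exact mem_closure_of_subset hA _ _
      (by rw [Zset_fOf hA, Zset_fOf hA]; exact hsub)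
  have hgi_big : g i ∈ Zbig := ⟨i, by simp [Fin.coe_castSucc], rfl⟩
  have hgi_small : g i ∉ Zsmall := by
    rintro ⟨j, hj, hji⟩
    cases hg hji
    simp only [Set.mem_setOf_eq, Fin.val_succ] at hj
    omega
  have hfinsmall : Zsmall.Finite := Set.Finite.image g (Set.toFinite _)
  have hnotmem : mkM (fOf K Zsmall (hZmax i.succ)) ∉
      closure {mkM (fOf K Zbig (hZmax i.castSucc))} :=
    not_mem_closure hA _ _ (by rw [Zset_fOf hA]; exact hfinsmall)
      (p := g i) (by rw [Zset_fOf hA]; exact hgi_big)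
      (by rw [Zset_fOf hA]; exact hgi_small)
  exact HasSubset.Subset.ssubset_of_not_subset hsubcl
    (fun hcon => hnotmem (hcon (subset_closure rfl)))

lemma le_dim (hA : ¬IsField A) (m : ℕ) (g : Fin m → Ideal A)
    (hg : Function.Injective g) (hmax : ∀ i, (g i).IsMaximal) :
    (m : WithBot ℕ∞) ≤ topologicalKrullDim (M1 A K) := by
  obtain ⟨p, hp⟩ := exists_ltSeries (K := K) hA m g hg hmax
  have := Order.LTSeries.length_le_krullDim p
  rw [hp] at this
  exact this

/-- The bijection between `M1 A K` and sets of maximal ideals. -/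
noncomputable def equivSet (hA : ¬IsField A) :
    M1 A K ≃ Set {p : Ideal A // p.IsMaximal} := by
  refine Equiv.ofBijective (fun x => {p | (p : Ideal A) ∈ ZQ x}) ⟨?_, ?_⟩
  · intro x y h
    have h' : {p : {p : Ideal A // p.IsMaximal} | (p : Ideal A) ∈ ZQ x} =
        {p : {p : Ideal A // p.IsMaximal} | (p : Ideal A) ∈ ZQ y} := h
    apply ZQ_injective
    ext q
    constructor
    · intro hq
      have hmem : (⟨q, ZQ_max x q hq⟩ : {p : Ideal A // p.IsMaximal}) ∈
          {p : {p : Ideal A // p.IsMaximal} | (p : Ideal A) ∈ ZQ x} := hq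
      rw [h'] at hmem
      exact hmem
    · intro hq
      have hmem : (⟨q, ZQ_max y q hq⟩ : {p : Ideal A // p.IsMaximal}) ∈
          {p : {p : Ideal A // p.IsMaximal} | (p : Ideal A) ∈ ZQ y} := hq
      rw [← h'] at hmem
      exact hmem
  · intro W
    have hW : ∀ q ∈ Subtype.val '' W, Ideal.IsMaximal q := by
      rintro q ⟨p, _, rfl⟩
      exact p.2
    refine ⟨mkM (fOf K (Subtype.val '' W) hW), ?_⟩
    ext q
    show (q : Ideal A) ∈ Zset A K (fOf K (Subtype.val '' W) hW) ↔ q ∈ W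
    rw [Zset_fOf hA]
    exact Subtype.val_injective.mem_set_image

lemma finiteM1 (hA : ¬IsField A) (hfin : {p : Ideal A | p.IsMaximal}.Finite) :
    Finite (M1 A K) := by
  haveI : Finite {p : Ideal A // p.IsMaximal} := hfin.to_subtype
  exact Finite.of_equiv _ (equivSet (K := K) hA).symm

/-- In a finite space every irreducible closed set has a generic point. -/
lemma exists_generic {X : Type*} [TopologicalSpace X] [Finite X] {C : Set X}
    (hirr : IsIrreducible C) (hcl : IsClosed C) : ∃ x ∈ C, C = closure {x} := by
  classical
  haveI := Fintype.ofFinite X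
  obtain ⟨z, hz, hCz⟩ := isIrreducible_iff_sUnion_isClosed.mp hirr
    (C.toFinset.image fun x => closure {x})
    (by
      intro z hz
      simp only [Finset.mem_image] at hz
      obtain ⟨x, _, rfl⟩ := hz
      exact isClosed_closure)
    (by
      intro x hx
      rw [Set.mem_sUnion]
      refine ⟨closure {x}, ?_, subset_closure rfl⟩
      simp only [Finset.coe_image, Set.mem_image, Finset.mem_coe]
      exact ⟨x, Set.mem_toFinset.mpr hx, rfl⟩)
  simp only [Finset.mem_image] at hz
  obtain ⟨x, hxC, rfl⟩ := hz
  exact ⟨x, Set.mem_toFinset.mp hxC,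
    le_antisymm hCz (closure_minimal
      (Set.singleton_subset_iff.mpr (Set.mem_toFinset.mp hxC)) hcl)⟩

lemma dim_le (hA : ¬IsField A) (hfin : {p : Ideal A | p.IsMaximal}.Finite) :
    topologicalKrullDim (M1 A K) ≤ (hfin.toFinset.card : WithBot ℕ∞) := by
  haveI : Finite (M1 A K) := finiteM1 hA hfin
  set n := hfin.toFinset.card with hn
  show Order.krullDim _ ≤ _
  rw [Order.krullDim]
  apply iSup_le
  intro p
  choose x hxmem hxcl using fun i =>
    exists_generic (p.toFun i).isIrreducible (p.toFun i).isClosed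
  have hZfin : ∀ i, (ZQ (x i)).Finite := fun i =>
    hfin.subset (fun q hq => ZQ_max _ q hq)
  have hanti : ∀ i j : Fin (p.length + 1), i < j → ZQ (x j) ⊂ ZQ (x i) := by
    intro i j hij
    have hlt : p.toFun i < p.toFun j := p.strictMono hij
    have hclsub : closure {x i} ⊆ closure {x j} := by
      rw [← hxcl i, ← hxcl j]
      exact le_of_lt (SetLike.coe_ssubset_coe.mpr hlt)
    have hmem : x i ∈ closure {x j} := hclsub (subset_closure rfl)
    have hsub : ZQ (x j) ⊆ ZQ (x i) := (spec_iff hA _ _ (hZfin i)).mp hmem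
    refine ⟨hsub, fun hcon => ?_⟩
    have heq : ZQ (x i) = ZQ (x j) := le_antisymm hcon hsub
    have hmem' : x j ∈ closure {x i} :=
      (spec_iff hA _ _ (hZfin j)).mpr heq.subset
    have : closure {x j} ⊆ closure {x i} :=
      closure_minimal (Set.singleton_subset_iff.mpr hmem') isClosed_closure
    have hcar : (p.toFun i : Set (M1 A K)) = (p.toFun j : Set (M1 A K)) := by
      rw [hxcl i, hxcl j]
      exact le_antisymm hclsub this
    exact ne_of_lt hlt (TopologicalSpace.IrreducibleCloseds.ext hcar)
  have hcard : ∀ i, (ZQ (x i)).ncard ≤ n := by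
    intro i
    have h1 : ZQ (x i) ⊆ {p : Ideal A | p.IsMaximal} := fun q hq => ZQ_max (x i) q hq
    have h2 := Set.ncard_le_ncard h1 hfin
    rw [Set.ncard_eq_toFinset_card _ hfin] at h2
    rw [hn]
    exact h2
  have hinj : Function.Injective
      (fun i : Fin (p.length + 1) =>
        (⟨(ZQ (x i)).ncard, Nat.lt_succ_of_le (hcard i)⟩ : Fin (n + 1))) := by
    intro i j hij
    simp only [Fin.mk.injEq] at hij
    by_contra hne
    rcases lt_or_gt_of_ne hne with h | h
    · exact Nat.ne_of_lt (Set.ncard_lt_ncard (hanti i j h) (hZfin i)) hij.symm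
    · exact Nat.ne_of_lt (Set.ncard_lt_ncard (hanti j i h) (hZfin j)) hij
  have hlen : p.length + 1 ≤ n + 1 := by
    have := Fintype.card_le_of_injective _ hinj
    simpa using this
  have hlen' : p.length ≤ n := Nat.lt_succ_iff.mp (Nat.lt_succ_of_le (Nat.le_of_succ_le_succ hlen))
  exact_mod_cast hlen'

end Stmt19Aux

theorem statement19 (A K : Type*) [CommRing A] [IsDomain A] [IsDedekindDomain A]
    (hA : ¬IsField A) [Field K] :
    (∀ (hfin : {p : Ideal A | p.IsMaximal}.Finite),
      topologicalKrullDim (M1 A K) = hfin.toFinset.card) ∧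
    ({p : Ideal A | p.IsMaximal}.Infinite → topologicalKrullDim (M1 A K) = ⊤) ∧
    (∀ (hfin : {p : Ideal A | p.IsMaximal}.Finite),
      Nat.card (M1 A K) = 2 ^ hfin.toFinset.card) := by
  classical
  refine ⟨?_, ?_, ?_⟩
  · -- finite case: dimension = n
    intro hfin
    refine le_antisymm (Stmt19Aux.dim_le hA hfin) ?_
    set n := hfin.toFinset.card with hn
    have e := hfin.toFinset.equivFin
    have hg : ∀ i : Fin n, ((e.symm i : Ideal A)).IsMaximal := fun i =>
      hfin.mem_toFinset.mp (e.symm i).2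
    exact Stmt19Aux.le_dim hA n (fun i => (e.symm i : Ideal A))
      (fun i j hij => e.symm.injective (Subtype.val_injective hij)) hg
  · -- infinite case: dimension = ⊤
    intro hinf
    have hle : ∀ m : ℕ, (m : WithBot ℕ∞) ≤ topologicalKrullDim (M1 A K) := by
      intro m
      obtain ⟨t, hts, htfin, htcard⟩ := hinf.exists_subset_ncard_eq m
      rw [Set.ncard_eq_toFinset_card _ htfin] at htcard
      have e := htfin.toFinset.equivFin
      refine Stmt19Aux.le_dim hA m
        (fun i => (e.symm (Fin.cast htcard.symm i) : Ideal A)) ?_ ?_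
      · intro i j hij
        have h4 := e.symm.injective (Subtype.val_injective hij)
        have h5 := congrArg Fin.val h4
        rw [Fin.coe_cast, Fin.coe_cast] at h5
        exact Fin.ext h5
      · intro i
        exact hts (htfin.mem_toFinset.mp (e.symm _).2)
    rcases hd : topologicalKrullDim (M1 A K) with _ | e
    · exfalso
      have h0 := hle 0
      rw [hd] at h0
      have h0' : ((0 : ℕ) : WithBot ℕ∞) = ⊥ := le_bot_iff.mp h0
      rw [show ((0 : ℕ) : WithBot ℕ∞) = ((0 : ℕ∞) : WithBot ℕ∞) by norm_cast] at h0'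
      exact WithBot.coe_ne_bot h0' 
    · rcases e with _ | k
      · rfl
      · exfalso
        have h1 := hle (k + 1)
        rw [hd] at h1
        rw [show (some (some k) : WithBot ℕ∞) = (((k : ℕ∞)) : WithBot ℕ∞) from rfl] at h1
        have h2 : (k + 1 : ℕ) ≤ k := by exact_mod_cast h1
        omega
  · -- cardinality
    intro hfin
    haveI : Finite {p : Ideal A // p.IsMaximal} := hfin.to_subtype
    have e := Stmt19Aux.equivSet (A := A) (K := K) hA
    rw [Nat.card_congr e]
    have h1 : Nat.card (Set {p : Ideal A // p.IsMaximal}) =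
        Nat.card ({p : Ideal A // p.IsMaximal} → Prop) := rfl
    have h2 : Nat.card Prop = 2 := by
      rw [Nat.card_eq_fintype_card]
      exact Fintype.card_prop
    have h3 : Nat.card {p : Ideal A // p.IsMaximal} = hfin.toFinset.card := by
      rw [show Nat.card {p : Ideal A // p.IsMaximal}
            = Nat.card ↥{p : Ideal A | p.IsMaximal} from rfl]
      rw [Nat.card_coe_set_eq, Set.ncard_eq_toFinset_card _ hfin]
    rw [h1, Nat.card_fun, h2, h3]
end
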